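/- arXiv:1702.08539 — 5 statements merged into one kernel-verified Lean document; each statement's English description precedes it below -/
import Mathlib

section
/- (Truncated moment problem on [-ε,ε], even case.) Let k ≥ 1 be a natural number, let ε > 0, and let t = (t_0, t_1, …, t_{2k}) be a real sequence with t_0 = 1. Then there exists a Borel probability measure μ on ℝ with μ([-ε,ε]) = 1 such that t_j = ∫ y^j dμ(y) for every j ∈ {1, …, 2k} if and only if the Hankel matrix M(0, 2k, t) is positive semidefinite and the matrix ε²·M(0, 2k−2, t) − M(2, 2k, t) is positive semidefinite. -/
open MeasureTheory

/-- The Hankel matrix `M(k, k+2h, t)`: the `(h+1) × (h+1)` matrix whose `(i,j)` entry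
is `t (k + i + j)`. -/
def hankel (t : ℕ → ℝ) (k h : ℕ) : Matrix (Fin (h + 1)) (Fin (h + 1)) ℝ :=
  Matrix.of fun i j => t (k + (i : ℕ) + (j : ℕ))

section Aux

open Polynomial

lemma real_root_quot (f : ℝ[X]) (hf : ∀ x, 0 ≤ f.eval x) (r : ℝ) (hr : f.eval r = 0) :
    ∃ g : ℝ[X], f = (X - C r)^2 * g ∧ ∀ x, 0 ≤ g.eval x := by
  have hmin : IsLocalMin (fun x => f.eval x) r :=
    Filter.Eventually.of_forall (fun x => by simpa [hr] using hf x)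
  have hderiv : f.derivative.eval r = 0 := by
    have h := hmin.deriv_eq_zero
    rwa [Polynomial.deriv] at h
  obtain ⟨g1, hg1⟩ := (dvd_iff_isRoot.mpr hr)
  have hg1r : g1.eval r = 0 := by
    have hd : f.derivative = g1 + (X - C r) * g1.derivative := by
      rw [hg1, derivative_mul]; simp
    have h2 := congrArg (Polynomial.eval r) hd
    simp [hderiv] at h2
    linarith
  obtain ⟨g, hg⟩ := (dvd_iff_isRoot.mpr hg1r)
  refine ⟨g, by rw [hg1, hg]; ring, ?_⟩
  have hge : ∀ x, x ≠ r → 0 ≤ g.eval x := by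
    intro x hx
    have hfx : f.eval x = (x - r)^2 * g.eval x := by
      rw [hg1, hg]; simp; ring
    have h2 : 0 < (x - r)^2 := by
      have : x - r ≠ 0 := sub_ne_zero.mpr hx
      positivity
    nlinarith [hf x]
  intro x
  rcases eq_or_ne x r with rfl | hx
  · by_contra hneg
    push_neg at hneg
    have hc : ContinuousAt (fun y => g.eval y) x := (Polynomial.continuous g).continuousAt
    have h1 : ∀ᶠ y in nhds x, g.eval y < 0 := hc.eventually_lt_const hneg
    have h2 : ∀ᶠ y in nhdsWithin x {x}ᶜ, g.eval y < 0 := h1.filter_mono nhdsWithin_le_nhds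
    obtain ⟨y, hy, hyx⟩ := (h2.and eventually_mem_nhdsWithin).exists
    exact absurd (hge y hyx) (not_le.mpr hy)
  · exact hge x hx

lemma quad_monic (a b : ℝ) : (((X - C a)^2 + C b : ℝ[X])).Monic ∧
    ((X - C a)^2 + C b : ℝ[X]).natDegree = 2 := by
  have hd2 : ((X - C a)^2 : ℝ[X]).degree = 2 := by
    rw [Polynomial.degree_pow, Polynomial.degree_X_sub_C]; rfl
  have hlt : (C b : ℝ[X]).degree < ((X - C a)^2 : ℝ[X]).degree := by
    rw [hd2]; exact lt_of_le_of_lt (degree_C_le) (by norm_num)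
  constructor
  · exact ((monic_X_sub_C a).pow 2).add_of_left hlt
  · exact natDegree_eq_of_degree_eq_some (by rw [degree_add_eq_left_of_degree_lt hlt, hd2]; rfl)

lemma quad_factor (f : ℝ[X]) (hf : ∀ x, 0 ≤ f.eval x) (z : ℂ) (hzim : z.im ≠ 0)
    (hz : (f.map (algebraMap ℝ ℂ)).eval z = 0) :
    ∃ g : ℝ[X], f = ((X - C z.re)^2 + C (z.im^2)) * g ∧ ∀ x, 0 ≤ g.eval x := by
  set q : ℝ[X] := (X - C z.re)^2 + C (z.im^2) with hq
  have hqmonic : q.Monic := (quad_monic z.re (z.im^2)).1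
  have hmapq : q.map (algebraMap ℝ ℂ) = (X - C z) * (X - C ((starRingEnd ℂ) z)) := by
    have e1 : (C z : ℂ[X]) = C (z.re : ℂ) + C (z.im : ℂ) * C Complex.I := by
      rw [← C_mul, ← C_add]; congr 1; exact (Complex.re_add_im z).symm
    have e2 : (C ((starRingEnd ℂ) z) : ℂ[X]) = C (z.re : ℂ) - C (z.im : ℂ) * C Complex.I := by
      rw [← C_mul, ← C_sub]; congr 1; rw [Complex.ext_iff]; simp
    have hI : (C Complex.I : ℂ[X])^2 = -1 := by
      rw [← C_pow, Complex.I_sq]; simp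
    rw [hq]
    push_cast [Polynomial.map_add, Polynomial.map_pow, Polynomial.map_sub, map_X, map_C]
    rw [e1, e2]
    simp only [Complex.coe_algebraMap]
    rw [show (C ((z.im:ℂ)^2) : ℂ[X]) = (C (z.im:ℂ))^2 by rw [C_pow]]
    linear_combination (C (z.im:ℂ))^2 * hI
  have hdvdC : q.map (algebraMap ℝ ℂ) ∣ f.map (algebraMap ℝ ℂ) := by
    rw [hmapq]
    have hne : IsUnit (z - (starRingEnd ℂ) z) := by
      refine isUnit_iff_ne_zero.mpr ?_
      intro h
      rw [sub_eq_zero, Complex.ext_iff] at h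
      simp at h
      exact hzim (by linarith [h])
    have hcop : IsCoprime (X - C z) (X - C ((starRingEnd ℂ) z)) :=
      isCoprime_X_sub_C_of_isUnit_sub hne
    have hzc : (f.map (algebraMap ℝ ℂ)).eval ((starRingEnd ℂ) z) = 0 := by
      have h : (starRingEnd ℂ) ((f.map (algebraMap ℝ ℂ)).eval z) = 0 := by rw [hz]; simp
      rw [Polynomial.eval_map] at h ⊢
      rw [Polynomial.hom_eval₂] at h
      convert h using 2
      ext a
      simp [Complex.conj_ofReal]
    exact hcop.mul_dvd (dvd_iff_isRoot.mpr hz) (dvd_iff_isRoot.mpr hzc)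
  have hdvd : q ∣ f := (map_dvd_map (algebraMap ℝ ℂ) (algebraMap ℝ ℂ).injective hqmonic).mp hdvdC
  obtain ⟨g, hg⟩ := hdvd
  refine ⟨g, hg, ?_⟩
  intro x
  have hqpos : 0 < q.eval x := by
    simp only [hq, eval_add, eval_pow, eval_sub, eval_X, eval_C]
    have : z.im ^ 2 > 0 := by positivity
    nlinarith
  have hfx : f.eval x = q.eval x * g.eval x := by rw [hg]; simp
  nlinarith [hf x]

theorem nonneg_sum_two_squares : ∀ (n : ℕ) (f : ℝ[X]), f.natDegree ≤ n →
    (∀ x, 0 ≤ f.eval x) → ∃ A B : ℝ[X], f = A^2 + B^2 := by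
  intro n
  induction n using Nat.strong_induction_on with
  | _ n ih =>
    intro f hdeg hf
    rcases eq_or_ne f 0 with rfl | hf0
    · exact ⟨0, 0, by ring⟩
    rcases Nat.eq_zero_or_pos f.natDegree with h0 | hpos
    · refine ⟨C (Real.sqrt (f.coeff 0)), 0, ?_⟩
      have hfc : f = C (f.coeff 0) := (Polynomial.eq_C_of_natDegree_eq_zero h0)
      have h00 : 0 ≤ f.coeff 0 := by
        have h := hf 0
        conv_rhs at h => rw [hfc]
        rwa [eval_C] at h
      conv_lhs => rw [hfc]
      rw [← C_pow, Real.sq_sqrt h00]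
      ring
    · have hdne : (f.map (algebraMap ℝ ℂ)).degree ≠ 0 := by
        rw [Polynomial.degree_map_eq_of_injective (algebraMap ℝ ℂ).injective]
        intro h
        rw [Polynomial.degree_eq_natDegree hf0] at h
        simp only [Nat.cast_eq_zero] at h
        omega
      obtain ⟨z, hz⟩ := IsAlgClosed.exists_root _ hdne
      rw [Polynomial.IsRoot] at hz
      rcases eq_or_ne z.im 0 with him | him
      · have hzre : z = ((z.re : ℝ) : ℂ) := by rw [Complex.ext_iff]; simp [him]
        have hroot : f.eval z.re = 0 := by
          have h1 : (f.map (algebraMap ℝ ℂ)).eval ((z.re : ℝ) : ℂ) = 0 := by rw [← hzre]; exact hz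
          rw [show ((z.re : ℝ) : ℂ) = (algebraMap ℝ ℂ) z.re from rfl, Polynomial.eval_map,
            Polynomial.eval₂_at_apply] at h1
          rw [show ((algebraMap ℝ ℂ) (f.eval z.re)) = ((f.eval z.re : ℝ) : ℂ) from rfl] at h1
          exact_mod_cast h1
        obtain ⟨g, hgf, hgpos⟩ := real_root_quot f hf z.re hroot
        have hg0 : g ≠ 0 := fun h => hf0 (by rw [hgf, h, mul_zero])
        have hq0 : ((X - C z.re)^2 : ℝ[X]) ≠ 0 := ((monic_X_sub_C z.re).pow 2).ne_zero
        have hdg : g.natDegree < n := by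
          have hfd : f.natDegree = 2 + g.natDegree := by
            rw [hgf, Polynomial.natDegree_mul hq0 hg0]
            congr 1
            rw [(monic_X_sub_C z.re).natDegree_pow]
            simp [natDegree_X_sub_C]
          omega
        obtain ⟨A, B, hAB⟩ := ih g.natDegree hdg g le_rfl hgpos
        exact ⟨(X - C z.re) * A, (X - C z.re) * B, by rw [hgf, hAB]; ring⟩
      · obtain ⟨g, hgf, hgpos⟩ := quad_factor f hf z him hz
        have hg0 : g ≠ 0 := fun h => hf0 (by rw [hgf, h, mul_zero])
        have hdg : g.natDegree < n := by
          have hfd : f.natDegree = 2 + g.natDegree := by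
            rw [hgf, Polynomial.natDegree_mul (quad_monic z.re (z.im^2)).1.ne_zero hg0,
              (quad_monic z.re (z.im^2)).2]
          omega
        obtain ⟨A, B, hAB⟩ := ih g.natDegree hdg g le_rfl hgpos
        refine ⟨(X - C z.re) * A - C z.im * B, (X - C z.re) * B + C z.im * A, ?_⟩
        rw [hgf, hAB]
        rw [show (C (z.im^2) : ℝ[X]) = (C z.im)^2 by rw [C_pow]]
        ring



lemma sum_range_two_mul (g : ℕ → ℝ) (n : ℕ) :
    ∑ m ∈ Finset.range (2*n), g m = ∑ i ∈ Finset.range n, (g (2*i) + g (2*i+1)) := by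
  induction n with
  | zero => simp
  | succ n ihn =>
    rw [show 2*(n+1) = 2*n + 1 + 1 by ring, Finset.sum_range_succ, Finset.sum_range_succ,
      Finset.sum_range_succ, ihn]
    rw [add_assoc]

lemma sq_add_sq_natDegree (A B : ℝ[X]) (hAB : A.natDegree ≤ B.natDegree) (hB : B ≠ 0) :
    (A^2+B^2).natDegree = 2 * B.natDegree := by
  have hco : (A^2+B^2).coeff (2 * B.natDegree) = A.leadingCoeff^2 + B.leadingCoeff^2 ∨
      (A^2+B^2).coeff (2 * B.natDegree) = B.leadingCoeff^2 := by
    rcases eq_or_lt_of_le hAB with heq | hlt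
    · left
      rw [Polynomial.coeff_add, sq A, sq B, sq, sq,
        show 2 * B.natDegree = A.natDegree + A.natDegree by omega]
      rw [Polynomial.coeff_mul_degree_add_degree]
      congr 1
      rw [show A.natDegree + A.natDegree = B.natDegree + B.natDegree by omega]
      rw [Polynomial.coeff_mul_degree_add_degree]
    · right
      rw [Polynomial.coeff_add, sq A, sq B,
        show 2 * B.natDegree = B.natDegree + B.natDegree by omega,
        Polynomial.coeff_mul_degree_add_degree]
      have : (A*A).natDegree < B.natDegree + B.natDegree := by
        calc (A*A).natDegree ≤ A.natDegree + A.natDegree := Polynomial.natDegree_mul_le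
        _ < B.natDegree + B.natDegree := by omega
      rw [Polynomial.coeff_eq_zero_of_natDegree_lt this, zero_add, sq]
  have hne : (A^2+B^2).coeff (2 * B.natDegree) ≠ 0 := by
    have hBl : B.leadingCoeff ≠ 0 := Polynomial.leadingCoeff_ne_zero.mpr hB
    rcases hco with h | h <;> rw [h] <;> positivity
  have h1 : 2 * B.natDegree ≤ (A^2+B^2).natDegree := Polynomial.le_natDegree_of_ne_zero hne
  have h2 : (A^2+B^2).natDegree ≤ 2 * B.natDegree := by
    refine le_trans (Polynomial.natDegree_add_le _ _) ?_
    refine max_le (le_trans Polynomial.natDegree_pow_le (by omega)) ?_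
    exact le_trans Polynomial.natDegree_pow_le (by omega)
  omega

lemma deg_le_of_sq_add_sq {F A B : ℝ[X]} (h : F = A^2 + B^2) {m : ℕ} (hF : F.natDegree ≤ 2*m) :
    A.natDegree ≤ m ∧ B.natDegree ≤ m := by
  rcases le_total A.natDegree B.natDegree with hab | hab
  · rcases eq_or_ne B 0 with rfl | hB
    · have hA0 : A.natDegree = 0 := le_antisymm (by simpa using hab) (Nat.zero_le _)
      exact ⟨by omega, by simp⟩
    · have := sq_add_sq_natDegree A B hab hB
      rw [← h] at this
      omega
  · rcases eq_or_ne A 0 with rfl | hA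
    · have hB0 : B.natDegree = 0 := le_antisymm (by simpa using hab) (Nat.zero_le _)
      exact ⟨by simp, by omega⟩
    · have := sq_add_sq_natDegree B A hab hA
      rw [show B^2 + A^2 = A^2+B^2 by ring, ← h] at this
      omega

lemma even_odd_eval (A : ℝ[X]) (k : ℕ) (hA : A.natDegree ≤ 2*k) (s : ℝ) :
    A.eval s = (∑ i ∈ Finset.range (k+1), C (A.coeff (2*i)) * X^i).eval (s^2)
      + s * (∑ i ∈ Finset.range k, C (A.coeff (2*i+1)) * X^i).eval (s^2) := by
  rw [Polynomial.eval_eq_sum_range' (n := 2*(k+1)) (by omega) s, sum_range_two_mul,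
    Finset.sum_add_distrib, eval_finset_sum, eval_finset_sum, Finset.mul_sum]
  congr 1
  · refine Finset.sum_congr rfl (fun i _ => ?_)
    simp only [eval_mul, eval_pow, eval_C, eval_X]
    rw [← pow_mul]
  · rw [Finset.sum_range_succ,
      Polynomial.coeff_eq_zero_of_natDegree_lt (show A.natDegree < 2*k+1 by omega)]
    simp only [zero_mul, add_zero]
    refine Finset.sum_congr rfl (fun i _ => ?_)
    simp only [eval_mul, eval_pow, eval_C, eval_X]
    rw [← pow_mul]
    ring

lemma rangePoly_deg (c : ℕ → ℝ) (n m : ℕ) (h : n ≤ m+1) :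
    (∑ i ∈ Finset.range n, C (c i) * X^i).natDegree ≤ m := by
  refine Polynomial.natDegree_sum_le_of_forall_le _ _ (fun i hi => ?_)
  have hi' := Finset.mem_range.mp hi
  refine le_trans Polynomial.natDegree_mul_le ?_
  rw [Polynomial.natDegree_C, Polynomial.natDegree_X_pow]
  omega

lemma hatPoly_deg (c : ℕ → ℝ) (ε : ℝ) (n m : ℕ) (h : n ≤ m+1) :
    (∑ i ∈ Finset.range n, C (c i) * (C ε - X)^i * (C ε + X)^(m-i)).natDegree ≤ m := by
  refine Polynomial.natDegree_sum_le_of_forall_le _ _ (fun i hi => ?_)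
  have hi' := Finset.mem_range.mp hi
  have e1 : (C ε - X : ℝ[X]).natDegree ≤ 1 := by
    refine le_trans (Polynomial.natDegree_sub_le _ _) ?_
    simp [Polynomial.natDegree_C, Polynomial.natDegree_X]
  have e2 : (C ε + X : ℝ[X]).natDegree ≤ 1 := by
    refine le_trans (Polynomial.natDegree_add_le _ _) ?_
    simp [Polynomial.natDegree_C, Polynomial.natDegree_X]
  have b1 : ((C ε - X : ℝ[X])^i).natDegree ≤ i :=
    le_trans Polynomial.natDegree_pow_le (by nlinarith [e1])
  have b2 : ((C ε + X : ℝ[X])^(m-i)).natDegree ≤ m - i :=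
    le_trans Polynomial.natDegree_pow_le (by nlinarith [e2])
  have b3 := Polynomial.natDegree_mul_le (p := C (c i) * (C ε - X)^i) (q := (C ε + X : ℝ[X])^(m-i))
  have b4 := Polynomial.natDegree_mul_le (p := (C (c i) : ℝ[X])) (q := (C ε - X : ℝ[X])^i)
  have b5 : (C (c i) : ℝ[X]).natDegree = 0 := Polynomial.natDegree_C _
  omega

lemma hatPoly_eval (c : ℕ → ℝ) (ε : ℝ) (n m : ℕ) (h : n ≤ m+1) (x : ℝ) (hx : ε + x ≠ 0) :
    (∑ i ∈ Finset.range n, C (c i) * (C ε - X)^i * (C ε + X)^(m-i)).eval x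
      = (ε+x)^m * (∑ i ∈ Finset.range n, c i * ((ε-x)/(ε+x))^i) := by
  rw [eval_finset_sum, Finset.mul_sum]
  refine Finset.sum_congr rfl (fun i hi => ?_)
  have hi' := Finset.mem_range.mp hi
  simp only [eval_mul, eval_pow, eval_sub, eval_add, eval_C, eval_X]
  rw [div_pow, show (ε+x)^m = (ε+x)^(m-i) * (ε+x)^i by rw [← pow_add]; congr 1; omega]
  field_simp

theorem lukacs (k : ℕ) (hk : 1 ≤ k) (ε : ℝ) (hε : 0 < ε) (p : ℝ[X]) (hdeg : p.natDegree ≤ 2*k)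
    (hpos : ∀ x ∈ Set.Icc (-ε) ε, 0 ≤ p.eval x) :
    ∃ P1 P2 Q1 Q2 : ℝ[X], P1.natDegree ≤ k ∧ P2.natDegree ≤ k ∧
      Q1.natDegree ≤ k-1 ∧ Q2.natDegree ≤ k-1 ∧
      p = P1^2 + P2^2 + (C (ε^2) - X^2) * (Q1^2 + Q2^2) := by
  -- the Goursat transform of p
  set F : ℝ[X] := ∑ j ∈ Finset.range (2*k+1),
    C (p.coeff j * ε^j) * (1 - X^2)^j * (1 + X^2)^(2*k - j) with hF
  have h1s : ∀ s : ℝ, (0:ℝ) < 1 + s^2 := fun s => by positivity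
  have hFeval : ∀ s : ℝ, F.eval s = (1+s^2)^(2*k) * p.eval (ε*(1-s^2)/(1+s^2)) := by
    intro s
    rw [hF, eval_finset_sum, Polynomial.eval_eq_sum_range' (n := 2*k+1)
      (by omega : p.natDegree < 2*k+1) (ε*(1-s^2)/(1+s^2)), Finset.mul_sum]
    refine Finset.sum_congr rfl (fun j hj => ?_)
    simp only [eval_mul, eval_pow, eval_sub, eval_add, eval_one, eval_C, eval_X]
    rw [div_pow, mul_pow]
    rw [show (1+s^2)^(2*k) = (1+s^2)^(2*k-j) * (1+s^2)^j by
      rw [← pow_add]; congr 1; have := Finset.mem_range.mp hj; omega]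
    field_simp
  have hFpos : ∀ s : ℝ, 0 ≤ F.eval s := by
    intro s
    rw [hFeval s]
    refine mul_nonneg (by positivity) (hpos _ ?_)
    constructor
    · rw [le_div_iff₀ (h1s s)]; nlinarith
    · rw [div_le_iff₀ (h1s s)]; nlinarith
  have hFdeg : F.natDegree ≤ 2*(2*k) := by
    refine Polynomial.natDegree_sum_le_of_forall_le _ _ (fun j hj => ?_)
    have hj' := Finset.mem_range.mp hj
    have e2 : ((1:ℝ[X]) - X^2).natDegree ≤ 2 := by
      refine le_trans (Polynomial.natDegree_sub_le _ _) ?_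
      simp [Polynomial.natDegree_X_pow]
    have e3 : ((1:ℝ[X]) + X^2).natDegree ≤ 2 := by
      refine le_trans (Polynomial.natDegree_add_le _ _) ?_
      simp [Polynomial.natDegree_X_pow]
    have b1 : (((1:ℝ[X]) - X^2)^j).natDegree ≤ j * 2 :=
      le_trans Polynomial.natDegree_pow_le (Nat.mul_le_mul_left j e2)
    have b2 : (((1:ℝ[X]) + X^2)^(2*k-j)).natDegree ≤ (2*k-j) * 2 :=
      le_trans Polynomial.natDegree_pow_le (Nat.mul_le_mul_left _ e3)
    have b3 := Polynomial.natDegree_mul_le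
      (p := C (p.coeff j * ε^j) * ((1:ℝ[X]) - X^2)^j) (q := ((1:ℝ[X]) + X^2)^(2*k-j))
    have b4 := Polynomial.natDegree_mul_le (p := C (p.coeff j * ε^j)) (q := ((1:ℝ[X]) - X^2)^j)
    have b5 : (C (p.coeff j * ε^j)).natDegree = 0 := Polynomial.natDegree_C _
    omega
  obtain ⟨A, B, hABF⟩ := nonneg_sum_two_squares (2*(2*k)) F hFdeg hFpos
  obtain ⟨hAdeg, hBdeg⟩ := deg_le_of_sq_add_sq hABF hFdeg
  -- even and odd parts of A and B
  set Ae : ℝ[X] := ∑ i ∈ Finset.range (k+1), C (A.coeff (2*i)) * X^i with hAe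
  set Ao : ℝ[X] := ∑ i ∈ Finset.range k, C (A.coeff (2*i+1)) * X^i with hAo
  set Be : ℝ[X] := ∑ i ∈ Finset.range (k+1), C (B.coeff (2*i)) * X^i with hBe
  set Bo : ℝ[X] := ∑ i ∈ Finset.range k, C (B.coeff (2*i+1)) * X^i with hBo
  set HAe : ℝ[X] := ∑ i ∈ Finset.range (k+1), C (A.coeff (2*i)) * (C ε - X)^i * (C ε + X)^(k-i) with hHAe
  set HBe : ℝ[X] := ∑ i ∈ Finset.range (k+1), C (B.coeff (2*i)) * (C ε - X)^i * (C ε + X)^(k-i) with hHBe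
  set HAo : ℝ[X] := ∑ i ∈ Finset.range k, C (A.coeff (2*i+1)) * (C ε - X)^i * (C ε + X)^(k-1-i) with hHAo
  set HBo : ℝ[X] := ∑ i ∈ Finset.range k, C (B.coeff (2*i+1)) * (C ε - X)^i * (C ε + X)^(k-1-i) with hHBo
  set c0 : ℝ := (2*ε)^k with hc0def
  have hc0 : c0 ≠ 0 := by positivity
  refine ⟨C (1/c0) * HAe, C (1/c0) * HBe, C (1/c0) * HAo, C (1/c0) * HBo, ?_, ?_, ?_, ?_, ?_⟩
  · refine le_trans Polynomial.natDegree_mul_le ?_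
    rw [Polynomial.natDegree_C, zero_add]
    exact hatPoly_deg _ ε (k+1) k le_rfl
  · refine le_trans Polynomial.natDegree_mul_le ?_
    rw [Polynomial.natDegree_C, zero_add]
    exact hatPoly_deg _ ε (k+1) k le_rfl
  · refine le_trans Polynomial.natDegree_mul_le ?_
    rw [Polynomial.natDegree_C, zero_add]
    exact hatPoly_deg _ ε k (k-1) (by omega)
  · refine le_trans Polynomial.natDegree_mul_le ?_
    rw [Polynomial.natDegree_C, zero_add]
    exact hatPoly_deg _ ε k (k-1) (by omega)
  · -- the polynomial identity, via evaluation on the infinite set Ioo (-ε) ε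
    apply Polynomial.eq_of_infinite_eval_eq
    have hinf : (Set.Ioo (-ε) ε).Infinite := by
      rw [← Set.infinite_coe_iff]; exact Set.Ioo.infinite (by linarith)
    refine hinf.mono ?_
    intro x hx
    simp only [Set.mem_setOf_eq]
    obtain ⟨hx1, hx2⟩ := hx
    have hεx : (0:ℝ) < ε + x := by linarith
    have hεx' : (0:ℝ) < ε - x := by linarith
    set u : ℝ := (ε-x)/(ε+x) with hu
    have hu0 : 0 ≤ u := le_of_lt (div_pos hεx' hεx)
    set s : ℝ := Real.sqrt u with hs
    have hs2 : s^2 = u := Real.sq_sqrt hu0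
    have harg : ε*(1-s^2)/(1+s^2) = x := by
      rw [hs2, hu]
      field_simp
      ring
    have hargN : ε*(1-(-s)^2)/(1+(-s)^2) = x := by rw [neg_sq]; exact harg
    have hAeu : ∀ v : ℝ, Ae.eval v = ∑ i ∈ Finset.range (k+1), A.coeff (2*i) * v^i := by
      intro v; rw [hAe, eval_finset_sum]; exact Finset.sum_congr rfl (fun i _ => by simp)
    have hBeu : ∀ v : ℝ, Be.eval v = ∑ i ∈ Finset.range (k+1), B.coeff (2*i) * v^i := by
      intro v; rw [hBe, eval_finset_sum]; exact Finset.sum_congr rfl (fun i _ => by simp)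
    have hAou : ∀ v : ℝ, Ao.eval v = ∑ i ∈ Finset.range k, A.coeff (2*i+1) * v^i := by
      intro v; rw [hAo, eval_finset_sum]; exact Finset.sum_congr rfl (fun i _ => by simp)
    have hBou : ∀ v : ℝ, Bo.eval v = ∑ i ∈ Finset.range k, B.coeff (2*i+1) * v^i := by
      intro v; rw [hBo, eval_finset_sum]; exact Finset.sum_congr rfl (fun i _ => by simp)
    -- key scalar identity
    have eS : (1+u)^(2*k) * p.eval x = (Ae.eval u + s*Ao.eval u)^2 + (Be.eval u + s*Bo.eval u)^2 := by
      have h1 := hFeval s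
      rw [harg, hs2] at h1
      rw [← h1, hABF]
      simp only [eval_add, eval_pow]
      rw [even_odd_eval A k hAdeg s, even_odd_eval B k hBdeg s, hs2]
    have eN : (1+u)^(2*k) * p.eval x = (Ae.eval u - s*Ao.eval u)^2 + (Be.eval u - s*Bo.eval u)^2 := by
      have h1 := hFeval (-s)
      rw [hargN, neg_sq, hs2] at h1
      rw [← h1, hABF]
      simp only [eval_add, eval_pow]
      rw [even_odd_eval A k hAdeg (-s), even_odd_eval B k hBdeg (-s), neg_sq, hs2]
      ring
    have key : (1+u)^(2*k) * p.eval x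
        = Ae.eval u^2 + u*Ao.eval u^2 + Be.eval u^2 + u*Bo.eval u^2 := by
      linear_combination (1/2)*eS + (1/2)*eN + (Ao.eval u^2 + Bo.eval u^2) * hs2
    have hpow : (1+u)^(2*k) * (ε+x)^(2*k) = c0^2 := by
      rw [← mul_pow, show (1+u)*(ε+x) = 2*ε by rw [hu]; field_simp; ring, hc0def]
      ring
    have h2 : u * ((ε+x)^2) = ε^2 - x^2 := by rw [hu]; field_simp; ring
    have hsplit : (ε+x)^(2*k) = (ε+x)^(2*(k-1)) * (ε+x)^2 := by
      rw [← pow_add]; congr 1; omega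
    have goal_eval : p.eval x * c0^2
        = (ε+x)^(2*k) * (Ae.eval u^2 + Be.eval u^2)
          + (ε^2-x^2) * ((ε+x)^(2*(k-1)) * (Ao.eval u^2 + Bo.eval u^2)) := by
      calc p.eval x * c0^2 = ((1+u)^(2*k) * p.eval x) * (ε+x)^(2*k) := by rw [← hpow]; ring
        _ = (Ae.eval u^2 + u*Ao.eval u^2 + Be.eval u^2 + u*Bo.eval u^2) * (ε+x)^(2*k) := by
            rw [key]
        _ = _ := by
            rw [hsplit]
            linear_combination ((ε+x)^(2*(k-1)) * (Ao.eval u^2 + Bo.eval u^2)) * h2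
    -- evaluate the right-hand side
    have hHAex : HAe.eval x = (ε+x)^k * Ae.eval u := by
      rw [hHAe, hatPoly_eval _ ε (k+1) k le_rfl x (ne_of_gt hεx), hAeu]
    have hHBex : HBe.eval x = (ε+x)^k * Be.eval u := by
      rw [hHBe, hatPoly_eval _ ε (k+1) k le_rfl x (ne_of_gt hεx), hBeu]
    have hHAox : HAo.eval x = (ε+x)^(k-1) * Ao.eval u := by
      rw [hHAo, hatPoly_eval _ ε k (k-1) (by omega) x (ne_of_gt hεx), hAou]
    have hHBox : HBo.eval x = (ε+x)^(k-1) * Bo.eval u := by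
      rw [hHBo, hatPoly_eval _ ε k (k-1) (by omega) x (ne_of_gt hεx), hBou]
    have hpk : ((ε+x)^k)^2 = (ε+x)^(2*k) := by ring
    have hpk1 : ((ε+x)^(k-1))^2 = (ε+x)^(2*(k-1)) := by ring
    apply mul_right_cancel₀ (pow_ne_zero 2 hc0)
    rw [goal_eval]
    simp only [eval_add, eval_mul, eval_sub, eval_pow, eval_C, eval_X]
    rw [hHAex, hHBex, hHAox, hHBox]
    field_simp
    linear_combination ((Ae.eval u^2 + Be.eval u^2) * c0^2) * hpk
      + ((ε^2-x^2) * (Ao.eval u^2 + Bo.eval u^2) * c0^2) * hpk1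



noncomputable def Lf (t : ℕ → ℝ) (N : ℕ) (p : ℝ[X]) : ℝ :=
  ∑ n ∈ Finset.range N, p.coeff n * t n

lemma Lf_add (t : ℕ → ℝ) (N : ℕ) (p q : ℝ[X]) : Lf t N (p+q) = Lf t N p + Lf t N q := by
  simp [Lf, coeff_add, add_mul, Finset.sum_add_distrib]

lemma Lf_sub (t : ℕ → ℝ) (N : ℕ) (p q : ℝ[X]) : Lf t N (p-q) = Lf t N p - Lf t N q := by
  simp [Lf, coeff_sub, sub_mul, Finset.sum_sub_distrib]

lemma Lf_sum (t : ℕ → ℝ) (N : ℕ) {ι : Type*} (s : Finset ι) (f : ι → ℝ[X]) :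
    Lf t N (∑ i ∈ s, f i) = ∑ i ∈ s, Lf t N (f i) := by
  simp only [Lf, finset_sum_coeff, Finset.sum_mul]
  exact Finset.sum_comm

lemma Lf_C_mul (t : ℕ → ℝ) (N : ℕ) (a : ℝ) (p : ℝ[X]) : Lf t N (C a * p) = a * Lf t N p := by
  simp [Lf, coeff_C_mul, Finset.mul_sum, mul_assoc]

lemma Lf_CXpow (t : ℕ → ℝ) (N : ℕ) (a : ℝ) (m : ℕ) (hm : m < N) :
    Lf t N (C a * X^m) = a * t m := by
  simp only [Lf, Polynomial.coeff_C_mul, Polynomial.coeff_X_pow]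
  rw [Finset.sum_eq_single m]
  · simp
  · intro b _ hb
    simp [hb]
  · intro hm'
    exact absurd (Finset.mem_range.mpr hm) hm'

lemma Lf_C (t : ℕ → ℝ) (N : ℕ) (a : ℝ) (hN : 0 < N) : Lf t N (C a) = a * t 0 := by
  have := Lf_CXpow t N a 0 hN
  simpa using this

lemma Lf_mul_expand (t : ℕ → ℝ) (N : ℕ) (P Q : ℝ[X]) (m m' : ℕ)
    (hP : P.natDegree < m) (hQ : Q.natDegree < m') (hmm : m + m' ≤ N + 1) :
    Lf t N (P*Q) = ∑ i ∈ Finset.range m, ∑ j ∈ Finset.range m',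
      P.coeff i * Q.coeff j * t (i+j) := by
  conv_lhs => rw [P.as_sum_range' m hP, Q.as_sum_range' m' hQ]
  rw [Finset.sum_mul_sum, Lf_sum]
  refine Finset.sum_congr rfl (fun i hi => ?_)
  rw [Lf_sum]
  refine Finset.sum_congr rfl (fun j hj => ?_)
  have hi' := Finset.mem_range.mp hi
  have hj' := Finset.mem_range.mp hj
  rw [Polynomial.monomial_mul_monomial, ← Polynomial.C_mul_X_pow_eq_monomial,
    Lf_CXpow t N _ (i+j) (by omega)]

lemma bridge1 {t : ℕ → ℝ} {k : ℕ} (hpsd : (hankel t 0 k).PosSemidef) (P : ℝ[X])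
    (hP : P.natDegree ≤ k) : 0 ≤ Lf t (2*k+1) (P*P) := by
  have h := hpsd.dotProduct_mulVec_nonneg (fun i : Fin (k+1) => P.coeff i)
  rw [Lf_mul_expand t (2*k+1) P P (k+1) (k+1) (by omega) (by omega) (by omega)]
  refine le_trans h (le_of_eq ?_)
  simp only [dotProduct, Matrix.mulVec, hankel, Matrix.of_apply, star_trivial]
  rw [Fin.sum_univ_eq_sum_range (fun i => P.coeff i *
    ∑ j : Fin (k+1), t (0 + i + (j:ℕ)) * P.coeff j) (k+1)]
  refine Finset.sum_congr rfl (fun i _ => ?_)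
  rw [Finset.mul_sum, Fin.sum_univ_eq_sum_range (fun j => P.coeff i * (t (0 + i + j) * P.coeff j)) (k+1)]
  refine Finset.sum_congr rfl (fun j _ => ?_)
  rw [show (0 + i + j) = i + j by omega]
  ring

lemma bridge2 {t : ℕ → ℝ} {k : ℕ} (hk : 1 ≤ k) {ε : ℝ}
    (hpsd : (ε ^ 2 • hankel t 0 (k - 1) - hankel t 2 (k - 1)).PosSemidef) (Q : ℝ[X])
    (hQ : Q.natDegree ≤ k-1) :
    0 ≤ ε^2 * Lf t (2*k+1) (Q*Q) - Lf t (2*k+1) ((X*Q)*(X*Q)) := by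
  have h := hpsd.dotProduct_mulVec_nonneg (fun i : Fin (k-1+1) => Q.coeff i)
  have hXQ : (X*Q).natDegree < k+1 := by
    refine lt_of_le_of_lt Polynomial.natDegree_mul_le ?_
    rw [Polynomial.natDegree_X]
    omega
  have hc0 : (X*Q).coeff 0 = 0 := by simp [Polynomial.mul_coeff_zero]
  have hcS : ∀ n, (X*Q).coeff (n+1) = Q.coeff n := fun n => Polynomial.coeff_X_mul Q n
  have e1 : (∑ i ∈ Finset.range (k+1), ∑ j ∈ Finset.range (k+1),
        (X*Q).coeff i * (X*Q).coeff j * t (i+j))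
      = ∑ i ∈ Finset.range k, ∑ j ∈ Finset.range k, Q.coeff i * Q.coeff j * t (i+j+2) := by
    rw [Finset.sum_range_succ' _ k]
    simp only [hc0, zero_mul, mul_zero, Finset.sum_const_zero, add_zero]
    refine Finset.sum_congr rfl (fun i _ => ?_)
    rw [Finset.sum_range_succ' _ k]
    simp only [hc0, mul_zero, zero_mul, add_zero]
    refine Finset.sum_congr rfl (fun j _ => ?_)
    rw [hcS, hcS, show i+1+(j+1) = i+j+2 by omega]
  have e2 : dotProduct (star (fun i : Fin (k-1+1) => Q.coeff i))
        ((ε ^ 2 • hankel t 0 (k - 1) - hankel t 2 (k - 1)).mulVec (fun i : Fin (k-1+1) => Q.coeff i))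
      = ∑ i ∈ Finset.range k, ∑ j ∈ Finset.range k,
          (ε^2 * (Q.coeff i * Q.coeff j * t (i+j)) - Q.coeff i * Q.coeff j * t (i+j+2)) := by
    simp only [dotProduct, Matrix.mulVec, Matrix.sub_apply, Matrix.smul_apply, hankel,
      Matrix.of_apply, star_trivial, smul_eq_mul]
    rw [Fin.sum_univ_eq_sum_range (fun i => Q.coeff i *
      ∑ j : Fin (k-1+1), (ε^2 * t (0 + i + (j:ℕ)) - t (2 + i + (j:ℕ))) * Q.coeff j) (k-1+1),
      show k-1+1 = k by omega]
    refine Finset.sum_congr rfl (fun i _ => ?_)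
    rw [Finset.mul_sum, Fin.sum_univ_eq_sum_range
      (fun j => Q.coeff i * ((ε^2 * t (0 + i + j) - t (2 + i + j)) * Q.coeff j)) k]
    refine Finset.sum_congr rfl (fun j _ => ?_)
    rw [show 0+i+j = i+j by omega, show 2+i+j = i+j+2 by omega]
    ring
  have e3 : (∑ i ∈ Finset.range k, ∑ j ∈ Finset.range k,
        (ε^2 * (Q.coeff i * Q.coeff j * t (i+j)) - Q.coeff i * Q.coeff j * t (i+j+2)))
      = ε^2 * (∑ i ∈ Finset.range k, ∑ j ∈ Finset.range k, Q.coeff i * Q.coeff j * t (i+j))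
        - ∑ i ∈ Finset.range k, ∑ j ∈ Finset.range k, Q.coeff i * Q.coeff j * t (i+j+2) := by
    simp only [Finset.sum_sub_distrib, Finset.mul_sum]
  rw [Lf_mul_expand t (2*k+1) Q Q k k (by omega) (by omega) (by omega),
    Lf_mul_expand t (2*k+1) (X*Q) (X*Q) (k+1) (k+1) hXQ hXQ (by omega), e1]
  rw [e2, e3] at h
  linarith

lemma pad_sum {E : Type*} {M : Type*} [AddCommMonoid M] (tt : Finset E) (N : ℕ)
    (hcard : tt.card ≤ N) (G : E → M) :
    (∑ i : Fin N, if h : (i:ℕ) < tt.card then G ((tt.equivFin.symm ⟨i, h⟩ : E)) else 0)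
      = ∑ y ∈ tt, G y := by
  rw [Fin.sum_univ_eq_sum_range
    (fun m => if h : m < tt.card then G ((tt.equivFin.symm ⟨m, h⟩ : E)) else 0) N]
  rw [← Finset.sum_subset (Finset.range_subset_range.mpr hcard)
    (fun m _ hm => dif_neg (by simpa using hm))]
  rw [← Fin.sum_univ_eq_sum_range]
  have h1 : ∀ m : Fin tt.card,
      (if h : (m:ℕ) < tt.card then G (tt.equivFin.symm ⟨(m:ℕ), h⟩) else 0)
        = G (tt.equivFin.symm m) := by
    intro m
    rw [dif_pos m.isLt]
  rw [Finset.sum_congr rfl (fun m _ => h1 m), Equiv.sum_comp tt.equivFin.symm (fun a => G (a:E))]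
  exact Finset.sum_coe_sort tt G

lemma isCompact_convexHull_of_isCompact {E : Type*} [NormedAddCommGroup E] [NormedSpace ℝ E]
    [FiniteDimensional ℝ E] {s : Set E} (hs : IsCompact s) :
    IsCompact (convexHull ℝ s) := by
  classical
  set N : ℕ := Module.finrank ℝ E + 1 with hN
  set D : Set ((Fin N → ℝ) × (Fin N → E)) :=
    (stdSimplex ℝ (Fin N)) ×ˢ (Set.univ.pi fun _ => s) with hD
  set Φ : ((Fin N → ℝ) × (Fin N → E)) → E := fun p => ∑ i, p.1 i • p.2 i with hΦ
  have hDcomp : IsCompact D := IsCompact.prod (isCompact_stdSimplex (𝕜 := ℝ) (ι := Fin N)) (isCompact_univ_pi fun _ => hs)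
  have hΦcont : Continuous Φ := by
    refine continuous_finset_sum _ (fun i _ => ?_)
    exact ((continuous_apply i).comp continuous_fst).smul ((continuous_apply i).comp continuous_snd)
  have himage : convexHull ℝ s = Φ '' D := by
    apply Set.Subset.antisymm
    · intro x hx
      rw [convexHull_eq_union] at hx
      simp only [Set.mem_iUnion] at hx
      obtain ⟨tt, hts, hai, hxt⟩ := hx
      have hcard : tt.card ≤ N := by
        have h1 := hai.card_le_finrank_succ
        have h2 : Module.finrank ℝ ↥(vectorSpan ℝ (Set.range ((↑) : tt → E))) ≤
            Module.finrank ℝ E := Submodule.finrank_le _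
        simp only [Fintype.card_coe] at h1
        omega
      rw [Finset.convexHull_eq] at hxt
      obtain ⟨w, hw0, hw1, hwx⟩ := hxt
      have htne : tt.Nonempty := by
        by_contra hne
        rw [Finset.not_nonempty_iff_eq_empty] at hne
        rw [hne] at hw1
        simp at hw1
      obtain ⟨y0, hy0⟩ := htne
      -- enumerate tt
      set e := tt.equivFin
      set f : Fin N → E := fun i => if h : (i : ℕ) < tt.card then (e.symm ⟨i, h⟩ : E) else y0 with hf
      set w' : Fin N → ℝ := fun i => if h : (i : ℕ) < tt.card then w (e.symm ⟨i, h⟩ : E) else 0 with hw'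
      refine ⟨(w', f), ⟨?_, ?_⟩, ?_⟩
      · -- w' in stdSimplex
        constructor
        · intro i
          rw [hw']
          dsimp only
          split
          · exact hw0 _ (Finset.coe_mem _)
          · exact le_refl 0
        · rw [hw']
          exact (pad_sum tt N hcard w).trans hw1
      · intro i _
        rw [hf]
        dsimp only
        split
        · exact hts (Finset.coe_mem _)
        · exact hts hy0
      · rw [hΦ]
        dsimp only
        have hterm : ∀ i : Fin N, w' i • f i
            = (if h : (i:ℕ) < tt.card then (fun y => w y • (id y : E)) ((tt.equivFin.symm ⟨i, h⟩ : E)) else 0) := by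
          intro i
          rw [hw', hf]
          dsimp only
          split
          · rfl
          · simp
        rw [Finset.sum_congr rfl (fun i _ => hterm i),
          pad_sum tt N hcard (fun y => w y • (id y : E)), ← Finset.centerMass_eq_of_sum_1 _ _ hw1, hwx]
    · rintro x ⟨⟨w, f⟩, ⟨hwmem, hfmem⟩, rfl⟩
      refine Convex.sum_mem (convex_convexHull ℝ s) (fun i _ => hwmem.1 i) hwmem.2 ?_
      intro i _
      exact subset_convexHull ℝ s (hfmem i (Set.mem_univ i))
  rw [himage]
  exact hDcomp.image hΦcont

theorem hard_dir (k : ℕ) (hk : 1 ≤ k) (ε : ℝ) (hε : 0 < ε) (t : ℕ → ℝ) (ht0 : t 0 = 1)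
    (h1 : (hankel t 0 k).PosSemidef)
    (h2 : (ε ^ 2 • hankel t 0 (k - 1) - hankel t 2 (k - 1)).PosSemidef) :
    ∃ μ : Measure ℝ, IsProbabilityMeasure μ ∧ μ (Set.Icc (-ε) ε) = 1 ∧
        ∀ j, 1 ≤ j → j ≤ 2 * k → t j = ∫ y, y ^ j ∂μ := by
  classical
  set c : ℝ → (Fin (2*k) → ℝ) := fun y i => y^((i:ℕ)+1) with hc
  have hccont : Continuous c := continuous_pi (fun i => continuous_pow _)
  set K : Set (Fin (2*k) → ℝ) := c '' Set.Icc (-ε) ε with hK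
  have hKcomp : IsCompact K := (isCompact_Icc).image hccont
  have hScomp : IsCompact (convexHull ℝ K) := isCompact_convexHull_of_isCompact hKcomp
  set v : Fin (2*k) → ℝ := fun i => t ((i:ℕ)+1) with hv
  have hvS : v ∈ convexHull ℝ K := by
    by_contra hv'
    obtain ⟨f, w, hfv, hfS⟩ := geometric_hahn_banach_point_closed
      (convex_convexHull ℝ K) hScomp.isClosed hv'
    set a : Fin (2*k) → ℝ := fun i => f (Pi.single i 1) with ha
    have hf_eq : ∀ x : Fin (2*k) → ℝ, f x = ∑ i, x i * a i := by
      intro x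
      conv_lhs => rw [← Finset.univ_sum_single x]
      rw [map_sum]
      refine Finset.sum_congr rfl (fun i _ => ?_)
      have hsingle : (Pi.single i (x i) : Fin (2*k) → ℝ)
          = x i • (Pi.single i 1 : Fin (2*k) → ℝ) := by
        ext j
        rcases eq_or_ne j i with rfl | hji
        · simp
        · simp [Pi.single_apply, hji]
      rw [hsingle, _root_.map_smul, smul_eq_mul, ha]
    set pp : ℝ[X] := (∑ i : Fin (2*k), C (a i) * X^((i:ℕ)+1)) - C w with hpp
    have hppdeg : pp.natDegree ≤ 2*k := by
      rw [hpp]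
      refine le_trans (natDegree_sub_le _ _) (max_le ?_ (by simp [natDegree_C]))
      refine Polynomial.natDegree_sum_le_of_forall_le _ _ (fun i _ => ?_)
      refine le_trans Polynomial.natDegree_mul_le ?_
      rw [Polynomial.natDegree_C, Polynomial.natDegree_X_pow]
      have := i.isLt
      omega
    have hppval : ∀ x : ℝ, pp.eval x = f (c x) - w := by
      intro x
      rw [hpp]
      simp only [eval_sub, eval_C, eval_finset_sum, eval_mul, eval_pow, eval_X]
      rw [hf_eq (c x)]
      congr 1
      refine Finset.sum_congr rfl (fun i _ => ?_)
      rw [hc]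
      ring
    have hpppos : ∀ x ∈ Set.Icc (-ε) ε, 0 ≤ pp.eval x := by
      intro x hx
      rw [hppval]
      have hcx : c x ∈ K := Set.mem_image_of_mem c hx
      have := hfS _ (subset_convexHull ℝ K hcx)
      linarith
    obtain ⟨P1, P2, Q1, Q2, hd1, hd2', hd3, hd4, hdecomp⟩ := lukacs k hk ε hε pp hppdeg hpppos
    have hLneg : Lf t (2*k+1) pp < 0 := by
      rw [hpp, Lf_sub, Lf_sum, Lf_C t (2*k+1) w (by omega)]
      have hterm : ∀ i : Fin (2*k), Lf t (2*k+1) (C (a i) * X^((i:ℕ)+1)) = a i * t ((i:ℕ)+1) :=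
        fun i => Lf_CXpow t (2*k+1) (a i) _ (by have := i.isLt; omega)
      rw [Finset.sum_congr rfl (fun i _ => hterm i), ht0, mul_one]
      have hfv' : f v = ∑ i, a i * t ((i:ℕ)+1) := by
        rw [hf_eq v]
        exact Finset.sum_congr rfl (fun i _ => by rw [hv]; ring)
      rw [← hfv']
      linarith
    have hLpos : 0 ≤ Lf t (2*k+1) pp := by
      have e : pp = P1*P1 + P2*P2 + (C (ε^2) * (Q1*Q1) + C (ε^2) * (Q2*Q2)
          - ((X*Q1)*(X*Q1) + (X*Q2)*(X*Q2))) := by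
        rw [hdecomp]; ring
      rw [e, Lf_add, Lf_add, Lf_sub, Lf_add, Lf_add, Lf_C_mul, Lf_C_mul]
      have b1 := bridge1 h1 P1 hd1
      have b2 := bridge1 h1 P2 hd2'
      have b3 := bridge2 hk h2 Q1 hd3
      have b4 := bridge2 hk h2 Q2 hd4
      linarith
    linarith
  rw [convexHull_eq] at hvS
  obtain ⟨ι, s, w, z, hw0, hw1, hzK, hcm⟩ := hvS
  have hy : ∀ i ∈ s, ∃ y, y ∈ Set.Icc (-ε) ε ∧ c y = z i := fun i hi => by
    obtain ⟨y, hy1, hy2⟩ := hzK i hi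
    exact ⟨y, hy1, hy2⟩
  set y : ι → ℝ := fun i => if h : ∃ yy, yy ∈ Set.Icc (-ε) ε ∧ c yy = z i then h.choose else 0
    with hydef
  have hymem : ∀ i ∈ s, y i ∈ Set.Icc (-ε) ε := fun i hi => by
    rw [hydef]; dsimp only; rw [dif_pos (hy i hi)]; exact (hy i hi).choose_spec.1
  have hyc : ∀ i ∈ s, c (y i) = z i := fun i hi => by
    rw [hydef]; dsimp only; rw [dif_pos (hy i hi)]; exact (hy i hi).choose_spec.2
  set μ : Measure ℝ := ∑ i ∈ s, (ENNReal.ofReal (w i)) • (Measure.dirac (y i)) with hμ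
  have happly : ∀ S : Set ℝ, MeasurableSet S →
      μ S = ∑ i ∈ s, (ENNReal.ofReal (w i)) * (Measure.dirac (y i)) S := by
    intro S hS
    rw [hμ, Measure.finset_sum_apply]
    exact Finset.sum_congr rfl (fun i _ => by rw [Measure.smul_apply, smul_eq_mul])
  have hw1' : (∑ i ∈ s, ENNReal.ofReal (w i)) = 1 := by
    rw [← ENNReal.ofReal_sum_of_nonneg hw0, hw1, ENNReal.ofReal_one]
  have hprob : IsProbabilityMeasure μ := by
    constructor
    rw [happly _ MeasurableSet.univ]
    simp only [measure_univ, mul_one]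
    exact hw1'
  have hicc : μ (Set.Icc (-ε) ε) = 1 := by
    rw [happly _ measurableSet_Icc]
    rw [← hw1']
    refine Finset.sum_congr rfl (fun i hi => ?_)
    rw [Measure.dirac_apply_of_mem (hymem i hi), mul_one]
  refine ⟨μ, hprob, hicc, fun j hj1 hj2 => ?_⟩
  have hint : ∀ i ∈ s, Integrable (fun x : ℝ => x ^ j) ((ENNReal.ofReal (w i)) • (Measure.dirac (y i))) := by
    intro i _
    refine Integrable.smul_measure ?_ ENNReal.ofReal_ne_top
    exact (integrable_const _).congr (MeasureTheory.ae_eq_dirac (fun x : ℝ => x ^ j)).symm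
  rw [hμ, integral_finset_sum_measure hint]
  have : ∀ i ∈ s, ∫ x, x ^ j ∂((ENNReal.ofReal (w i)) • (Measure.dirac (y i)))
      = w i * (y i)^j := by
    intro i hi
    rw [integral_smul_measure, integral_dirac, ENNReal.toReal_ofReal (hw0 i hi), smul_eq_mul]
  rw [Finset.sum_congr rfl this]
  -- use the centerMass identity at coordinate j-1
  have hsum : ∑ i ∈ s, w i • z i = v := by
    rw [← Finset.centerMass_eq_of_sum_1 _ _ hw1]
    exact hcm
  have hco := congrFun hsum (⟨j-1, by omega⟩ : Fin (2*k))
  rw [Finset.sum_apply] at hco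
  rw [hv] at hco
  dsimp only at hco
  rw [show j - 1 + 1 = j by omega] at hco
  rw [← hco]
  refine Finset.sum_congr rfl (fun i hi => ?_)
  rw [Pi.smul_apply, smul_eq_mul, ← hyc i hi, hc]
  dsimp only
  rw [show j - 1 + 1 = j by omega]

theorem easy_dir (k : ℕ) (hk : 1 ≤ k) (ε : ℝ) (hε : 0 < ε) (t : ℕ → ℝ) (ht0 : t 0 = 1)
    (μ : Measure ℝ) (hprob : IsProbabilityMeasure μ) (hicc : μ (Set.Icc (-ε) ε) = 1)
    (hmom : ∀ j, 1 ≤ j → j ≤ 2 * k → t j = ∫ y, y ^ j ∂μ) :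
    (hankel t 0 k).PosSemidef ∧
      (ε ^ 2 • hankel t 0 (k - 1) - hankel t 2 (k - 1)).PosSemidef := by
  have hae : ∀ᵐ x ∂μ, x ∈ Set.Icc (-ε) ε := by
    have hc : μ (Set.Icc (-ε) ε)ᶜ = 0 := by
      rw [measure_compl measurableSet_Icc (measure_ne_top μ _), hicc, measure_univ]
      simp
    rw [MeasureTheory.ae_iff]
    convert hc using 2
    rfl
  have hbound : ∀ m : ℕ, ∀ᵐ x ∂μ, ‖x ^ m‖ ≤ ε ^ m := by
    intro m
    filter_upwards [hae] with x hx
    rw [Real.norm_eq_abs, abs_pow]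
    exact pow_le_pow_left₀ (abs_nonneg x) (abs_le.mpr ⟨hx.1, hx.2⟩) m
  have hint : ∀ m : ℕ, Integrable (fun x : ℝ => x ^ m) μ := fun m =>
    ⟨(continuous_pow m).aestronglyMeasurable, HasFiniteIntegral.of_bounded (hbound m)⟩
  have hmom' : ∀ m, m ≤ 2*k → (∫ x, x ^ m ∂μ) = t m := by
    intro m hm
    rcases Nat.eq_zero_or_pos m with rfl | hm1
    · simp only [pow_zero]
      rw [MeasureTheory.integral_const, probReal_univ, ht0]
      simp
    · exact (hmom m hm1 hm).symm
  constructor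
  · refine Matrix.PosSemidef.of_dotProduct_mulVec_nonneg ?_ ?_
    · ext i j
      simp only [Matrix.conjTranspose_apply, hankel, Matrix.of_apply, star_trivial]
      congr 1
      omega
    · intro x
      have e0 : dotProduct (star x) ((hankel t 0 k).mulVec x)
          = ∑ i : Fin (k+1), ∑ j : Fin (k+1), (x i * x j) * t ((i:ℕ)+(j:ℕ)) := by
        simp only [dotProduct, Matrix.mulVec, hankel, Matrix.of_apply, star_trivial]
        refine Finset.sum_congr rfl (fun i _ => ?_)
        rw [Finset.mul_sum]
        refine Finset.sum_congr rfl (fun j _ => ?_)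
        rw [show (0:ℕ)+(i:ℕ)+(j:ℕ) = (i:ℕ)+(j:ℕ) by omega]
        ring
      have e1 : ∀ i j : Fin (k+1), (x i * x j) * t ((i:ℕ)+(j:ℕ))
          = ∫ y, (x i * x j) * y^((i:ℕ)+(j:ℕ)) ∂μ := by
        intro i j
        rw [MeasureTheory.integral_const_mul, hmom' _ (by have := i.isLt; have := j.isLt; omega)]
      have hintij : ∀ (i j : Fin (k+1)), Integrable (fun y : ℝ => x i * x j * y ^ ((i:ℕ)+(j:ℕ))) μ :=
        fun i j => (hint _).const_mul _
      have e2 : dotProduct (star x) ((hankel t 0 k).mulVec x)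
          = ∫ y, (∑ i : Fin (k+1), x i * y^(i:ℕ))^2 ∂μ := by
        rw [e0, Finset.sum_congr rfl (fun i _ => Finset.sum_congr rfl (fun j _ => e1 i j))]
        have s1 : ∀ i : Fin (k+1), (∑ j : Fin (k+1), ∫ y, x i * x j * y^((i:ℕ)+(j:ℕ)) ∂μ)
            = ∫ y, ∑ j : Fin (k+1), x i * x j * y^((i:ℕ)+(j:ℕ)) ∂μ :=
          fun i => (integral_finset_sum _ (fun j _ => hintij i j)).symm
        rw [Finset.sum_congr rfl (fun i _ => s1 i),
          ← integral_finset_sum _ (fun i _ => integrable_finset_sum _ (fun j _ => hintij i j))]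
        refine integral_congr_ae (Filter.Eventually.of_forall (fun y => ?_))
        dsimp only
        rw [sq, Finset.sum_mul_sum]
        refine Finset.sum_congr rfl (fun i _ => Finset.sum_congr rfl (fun j _ => ?_))
        rw [pow_add]
        ring
      rw [e2]
      exact integral_nonneg (fun y => sq_nonneg _)
  · refine Matrix.PosSemidef.of_dotProduct_mulVec_nonneg ?_ ?_
    · ext i j
      simp only [Matrix.conjTranspose_apply, Matrix.sub_apply, Matrix.smul_apply, hankel,
        Matrix.of_apply, star_trivial, smul_eq_mul]
      rw [show (0:ℕ)+(j:ℕ)+(i:ℕ) = 0+(i:ℕ)+(j:ℕ) by omega,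
        show (2:ℕ)+(j:ℕ)+(i:ℕ) = 2+(i:ℕ)+(j:ℕ) by omega]
    · intro x
      have hwint : ∀ m : ℕ, Integrable (fun y : ℝ => (ε^2 - y^2) * y ^ m) μ := by
        intro m
        have : (fun y : ℝ => (ε^2 - y^2) * y ^ m) = fun y : ℝ => ε^2 * y^m - y^(m+2) := by
          funext y
          rw [pow_add]
          ring
        rw [this]
        exact ((hint m).const_mul _).sub (hint (m+2))
      have hwmom : ∀ m, m ≤ 2*k - 2 → (∫ y, (ε^2 - y^2) * y ^ m ∂μ) = ε^2 * t m - t (m+2) := by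
        intro m hm
        have he : (fun y : ℝ => (ε^2 - y^2) * y ^ m) = fun y : ℝ => ε^2 * y^m - y^(m+2) := by
          funext y
          rw [pow_add]
          ring
        rw [he, integral_sub ((hint m).const_mul _) (hint (m+2)),
          MeasureTheory.integral_const_mul, hmom' m (by omega), hmom' (m+2) (by omega)]
      have e0 : dotProduct (star x)
            ((ε ^ 2 • hankel t 0 (k - 1) - hankel t 2 (k - 1)).mulVec x)
          = ∑ i : Fin (k-1+1), ∑ j : Fin (k-1+1),
              (x i * x j) * (ε^2 * t ((i:ℕ)+(j:ℕ)) - t (((i:ℕ)+(j:ℕ))+2)) := by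
        simp only [dotProduct, Matrix.mulVec, Matrix.sub_apply, Matrix.smul_apply, hankel,
          Matrix.of_apply, star_trivial, smul_eq_mul]
        refine Finset.sum_congr rfl (fun i _ => ?_)
        rw [Finset.mul_sum]
        refine Finset.sum_congr rfl (fun j _ => ?_)
        rw [show (0:ℕ)+(i:ℕ)+(j:ℕ) = (i:ℕ)+(j:ℕ) by omega,
          show (2:ℕ)+(i:ℕ)+(j:ℕ) = ((i:ℕ)+(j:ℕ))+2 by omega]
        ring
      have hij2 : ∀ i j : Fin (k-1+1), (i:ℕ)+(j:ℕ) ≤ 2*k-2 := by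
        intro i j
        have := i.isLt
        have := j.isLt
        omega
      have e1 : ∀ i j : Fin (k-1+1), (x i * x j) * (ε^2 * t ((i:ℕ)+(j:ℕ)) - t (((i:ℕ)+(j:ℕ))+2))
          = ∫ y, (x i * x j) * ((ε^2 - y^2) * y^((i:ℕ)+(j:ℕ))) ∂μ := by
        intro i j
        rw [MeasureTheory.integral_const_mul, hwmom _ (hij2 i j)]
      have hintij : ∀ (i j : Fin (k-1+1)),
          Integrable (fun y : ℝ => x i * x j * ((ε^2 - y^2) * y ^ ((i:ℕ)+(j:ℕ)))) μ :=
        fun i j => (hwint _).const_mul _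
      have e2 : dotProduct (star x)
            ((ε ^ 2 • hankel t 0 (k - 1) - hankel t 2 (k - 1)).mulVec x)
          = ∫ y, (ε^2 - y^2) * (∑ i : Fin (k-1+1), x i * y^(i:ℕ))^2 ∂μ := by
        rw [e0, Finset.sum_congr rfl (fun i _ => Finset.sum_congr rfl (fun j _ => e1 i j))]
        have s1 : ∀ i : Fin (k-1+1), (∑ j : Fin (k-1+1),
              ∫ y, x i * x j * ((ε^2 - y^2) * y^((i:ℕ)+(j:ℕ))) ∂μ)
            = ∫ y, ∑ j : Fin (k-1+1), x i * x j * ((ε^2 - y^2) * y^((i:ℕ)+(j:ℕ))) ∂μ :=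
          fun i => (integral_finset_sum _ (fun j _ => hintij i j)).symm
        rw [Finset.sum_congr rfl (fun i _ => s1 i),
          ← integral_finset_sum _ (fun i _ => integrable_finset_sum _ (fun j _ => hintij i j))]
        refine integral_congr_ae (Filter.Eventually.of_forall (fun y => ?_))
        dsimp only
        rw [pow_two (∑ i : Fin (k-1+1), x i * y^(i:ℕ)), Finset.sum_mul_sum, Finset.mul_sum]
        refine Finset.sum_congr rfl (fun i _ => ?_)
        rw [Finset.mul_sum]
        refine Finset.sum_congr rfl (fun j _ => ?_)
        rw [pow_add]
        ring
      rw [e2]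
      refine integral_nonneg_of_ae ?_
      filter_upwards [hae] with y hy
      have h1 : 0 ≤ ε^2 - y^2 := by nlinarith [hy.1, hy.2]
      exact mul_nonneg h1 (sq_nonneg _)

end Aux

/-- Truncated moment problem on `[-ε, ε]`, even case. -/
theorem truncated_moment_problem_even (k : ℕ) (hk : 1 ≤ k) (ε : ℝ) (hε : 0 < ε)
    (t : ℕ → ℝ) (ht0 : t 0 = 1) :
    (∃ μ : Measure ℝ, IsProbabilityMeasure μ ∧ μ (Set.Icc (-ε) ε) = 1 ∧
        ∀ j, 1 ≤ j → j ≤ 2 * k → t j = ∫ y, y ^ j ∂μ) ↔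
      ((hankel t 0 k).PosSemidef ∧
        (ε ^ 2 • hankel t 0 (k - 1) - hankel t 2 (k - 1)).PosSemidef) := by
  constructor
  · rintro ⟨μ, hp, hi, hm⟩
    exact easy_dir k hk ε hε t ht0 μ hp hi hm
  · rintro ⟨h1, h2⟩
    exact hard_dir k hk ε hε t ht0 h1 h2
end

section
/- (Truncated moment problem on [-ε,ε], odd case.) Let k ≥ 0 be a natural number, let ε > 0, and let t = (t_0, t_1, …, t_{2k+1}) be a real sequence with t_0 = 1. Then there exists a Borel probability measure μ on ℝ with μ([-ε,ε]) = 1 such that t_j = ∫ y^j dμ(y) for every j ∈ {1, …, 2k+1} if and only if the matrix ε·M(0, 2k, t) − M(1, 2k+1, t) is positive semidefinite and the matrix M(1, 2k+1, t) + ε·M(0, 2k, t) is positive semidefinite. -/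
open MeasureTheory

open Polynomial Finset Set

/-- Riesz functional truncated at `N`. -/
def LF (t : ℕ → ℝ) (N : ℕ) (p : ℝ[X]) : ℝ := ∑ n ∈ Finset.range N, p.coeff n * t n

lemma LF_add (t : ℕ → ℝ) (N : ℕ) (p q : ℝ[X]) : LF t N (p + q) = LF t N p + LF t N q := by
  simp [LF, add_mul, Finset.sum_add_distrib]

lemma LF_sum (t : ℕ → ℝ) (N : ℕ) {ι : Type*} (s : Finset ι) (f : ι → ℝ[X]) :
    LF t N (∑ i ∈ s, f i) = ∑ i ∈ s, LF t N (f i) := by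
  simp only [LF, Polynomial.finset_sum_coeff, Finset.sum_mul]
  exact Finset.sum_comm

lemma LF_monomial (t : ℕ → ℝ) {N n : ℕ} (hn : n < N) (a : ℝ) :
    LF t N (Polynomial.monomial n a) = a * t n := by
  simp only [LF, Polynomial.coeff_monomial]
  rw [Finset.sum_eq_single n]
  · simp
  · intro b _ hb; simp [Ne.symm hb]
  · intro h; exact absurd (Finset.mem_range.2 hn) h

lemma LF_C_mul (t : ℕ → ℝ) (N : ℕ) (a : ℝ) (p : ℝ[X]) :
    LF t N (Polynomial.C a * p) = a * LF t N p := by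
  simp [LF, Polynomial.coeff_C_mul, Finset.mul_sum, mul_assoc]

lemma LF_sq (t : ℕ → ℝ) {N k : ℕ} (s : ℕ) (hN : s + 2 * k < N) (q : ℝ[X])
    (hq : q.natDegree ≤ k) :
    LF t N (X ^ s * q ^ 2) =
      ∑ i : Fin (k + 1), ∑ j : Fin (k + 1),
        q.coeff i * q.coeff j * t (s + (i : ℕ) + (j : ℕ)) := by
  have hq' : q = ∑ i ∈ Finset.range (k + 1), Polynomial.monomial i (q.coeff i) :=
    q.as_sum_range' (k + 1) (Nat.lt_succ_of_le hq)
  calc LF t N (X ^ s * q ^ 2)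
      = LF t N (∑ i ∈ Finset.range (k+1), ∑ j ∈ Finset.range (k+1),
          Polynomial.monomial (s + i + j) (q.coeff i * q.coeff j)) := by
        congr 1
        rw [sq]
        nth_rewrite 1 [hq']; nth_rewrite 2 [hq']
        rw [Finset.sum_mul_sum, Finset.mul_sum]
        refine Finset.sum_congr rfl fun i _ => ?_
        rw [Finset.mul_sum]
        refine Finset.sum_congr rfl fun j _ => ?_
        rw [Polynomial.monomial_mul_monomial, ← Polynomial.smul_X_eq_monomial,
          mul_smul_comm, ← pow_add, Polynomial.smul_X_eq_monomial]
        rw [add_assoc]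
    _ = ∑ i ∈ Finset.range (k+1), ∑ j ∈ Finset.range (k+1),
          q.coeff i * q.coeff j * t (s + i + j) := by
        rw [LF_sum]
        refine Finset.sum_congr rfl fun i hi => ?_
        rw [LF_sum]
        refine Finset.sum_congr rfl fun j hj => ?_
        refine LF_monomial t ?_ _
        simp only [Finset.mem_range] at hi hj
        omega
    _ = _ := by
        rw [← Fin.sum_univ_eq_sum_range (fun i => ∑ j ∈ Finset.range (k+1),
              q.coeff i * q.coeff j * t (s + i + j))]
        refine Finset.sum_congr rfl fun i _ => ?_
        rw [← Fin.sum_univ_eq_sum_range]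
open Polynomial Finset Set

/-- membership in the truncated quadratic module for `[-ε, ε]` with degree bound `d`. -/
inductive MRep (ε : ℝ) : ℕ → ℝ[X] → Prop
  | zero (d : ℕ) : MRep ε d 0
  | add {d : ℕ} {p q : ℝ[X]} : MRep ε d p → MRep ε d q → MRep ε d (p + q)
  | sq (d : ℕ) (q : ℝ[X]) (h : 2 * q.natDegree ≤ d) : MRep ε d (q ^ 2)
  | pos (d : ℕ) (q : ℝ[X]) (h : 2 * q.natDegree + 1 ≤ d) : MRep ε d ((X + C ε) * q ^ 2)
  | neg (d : ℕ) (q : ℝ[X]) (h : 2 * q.natDegree + 1 ≤ d) : MRep ε d ((C ε - X) * q ^ 2)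
  | both (d : ℕ) (q : ℝ[X]) (h : 2 * q.natDegree + 2 ≤ d) :
      MRep ε d ((C ε - X) * ((X + C ε) * q ^ 2))

lemma natDegree_XaddC_le (ε : ℝ) : (X + C ε).natDegree ≤ 1 := by
  apply le_trans (Polynomial.natDegree_add_le _ _); simp

lemma natDegree_CsubX_le (ε : ℝ) : (C ε - X).natDegree ≤ 1 := by
  apply le_trans (Polynomial.natDegree_sub_le _ _); simp

lemma MRep.mono {ε : ℝ} {d d' : ℕ} {p : ℝ[X]} (h : MRep ε d p) (hd : d ≤ d') : MRep ε d' p := by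
  induction h with
  | zero => exact MRep.zero _
  | add _ _ ih1 ih2 => exact MRep.add ih1 ih2
  | sq q h => exact MRep.sq _ q (h.trans hd)
  | pos q h => exact MRep.pos _ q (h.trans hd)
  | neg q h => exact MRep.neg _ q (h.trans hd)
  | both q h => exact MRep.both _ q (h.trans hd)

lemma MRep.mul_sq {ε : ℝ} {d : ℕ} {p : ℝ[X]} (hp : MRep ε d p) (s : ℝ[X]) {m : ℕ}
    (hs : s.natDegree ≤ m) : MRep ε (d + 2 * m) (s ^ 2 * p) := by
  induction hp with
  | zero => rw [mul_zero]; exact MRep.zero _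
  | add _ _ ih1 ih2 => rw [mul_add]; exact MRep.add ih1 ih2
  | sq q h =>
      rw [← mul_pow]
      refine MRep.sq _ _ ?_
      have := (Polynomial.natDegree_mul_le (p := s) (q := q)).trans (add_le_add hs le_rfl)
      omega
  | pos q h =>
      have : s ^ 2 * ((X + C ε) * q ^ 2) = (X + C ε) * (s * q) ^ 2 := by ring
      rw [this]
      refine MRep.pos _ _ ?_
      have := (Polynomial.natDegree_mul_le (p := s) (q := q)).trans (add_le_add hs le_rfl)
      omega
  | neg q h =>
      have : s ^ 2 * ((C ε - X) * q ^ 2) = (C ε - X) * (s * q) ^ 2 := by ring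
      rw [this]
      refine MRep.neg _ _ ?_
      have := (Polynomial.natDegree_mul_le (p := s) (q := q)).trans (add_le_add hs le_rfl)
      omega
  | both q h =>
      have : s ^ 2 * ((C ε - X) * ((X + C ε) * q ^ 2)) =
          (C ε - X) * ((X + C ε) * (s * q) ^ 2) := by ring
      rw [this]
      refine MRep.both _ _ ?_
      have := (Polynomial.natDegree_mul_le (p := s) (q := q)).trans (add_le_add hs le_rfl)
      omega

lemma MRep.const_mul {ε : ℝ} {d : ℕ} {p : ℝ[X]} (hp : MRep ε d p) {c : ℝ} (hc : 0 ≤ c) :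
    MRep ε d (C c * p) := by
  have h := hp.mul_sq (C (Real.sqrt c)) (m := 0) (by simp)
  have : (C (Real.sqrt c)) ^ 2 = C c := by
    rw [← Polynomial.C_pow, Real.sq_sqrt hc]
  rw [this] at h
  simpa using h

lemma natDegree_mul_le_one_add {ε : ℝ} (a q : ℝ[X]) (ha : a.natDegree ≤ 1) :
    (a * q).natDegree ≤ 1 + q.natDegree :=
  (Polynomial.natDegree_mul_le).trans (add_le_add ha le_rfl)

lemma MRep.mul_XaddC {ε : ℝ} {d : ℕ} {p : ℝ[X]} (hp : MRep ε d p) :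
    MRep ε (d + 1) ((X + C ε) * p) := by
  induction hp with
  | zero => rw [mul_zero]; exact MRep.zero _
  | add _ _ ih1 ih2 => rw [mul_add]; exact MRep.add ih1 ih2
  | sq q h => exact MRep.pos _ q (by omega)
  | pos q h =>
      have : (X + C ε) * ((X + C ε) * q ^ 2) = ((X + C ε) * q) ^ 2 := by ring
      rw [this]
      refine MRep.sq _ _ ?_
      have := natDegree_mul_le_one_add (ε := ε) (X + C ε) q (natDegree_XaddC_le ε)
      omega
  | neg q h =>
      have : (X + C ε) * ((C ε - X) * q ^ 2) = (C ε - X) * ((X + C ε) * q ^ 2) := by ring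
      rw [this]
      exact MRep.both _ q (by omega)
  | both q h =>
      have : (X + C ε) * ((C ε - X) * ((X + C ε) * q ^ 2)) =
          (C ε - X) * (((X + C ε) * q) ^ 2) := by ring
      rw [this]
      refine MRep.neg _ _ ?_
      have := natDegree_mul_le_one_add (ε := ε) (X + C ε) q (natDegree_XaddC_le ε)
      omega

lemma MRep.mul_CsubX {ε : ℝ} {d : ℕ} {p : ℝ[X]} (hp : MRep ε d p) :
    MRep ε (d + 1) ((C ε - X) * p) := by
  induction hp with
  | zero => rw [mul_zero]; exact MRep.zero _
  | add _ _ ih1 ih2 => rw [mul_add]; exact MRep.add ih1 ih2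
  | sq q h => exact MRep.neg _ q (by omega)
  | pos q h => exact MRep.both _ q (by omega)
  | neg q h =>
      have : (C ε - X) * ((C ε - X) * q ^ 2) = ((C ε - X) * q) ^ 2 := by ring
      rw [this]
      refine MRep.sq _ _ ?_
      have := natDegree_mul_le_one_add (ε := ε) (C ε - X) q (natDegree_CsubX_le ε)
      omega
  | both q h =>
      have : (C ε - X) * ((C ε - X) * ((X + C ε) * q ^ 2)) =
          (X + C ε) * (((C ε - X) * q) ^ 2) := by ring
      rw [this]
      refine MRep.pos _ _ ?_
      have := natDegree_mul_le_one_add (ε := ε) (C ε - X) q (natDegree_CsubX_le ε)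
      omega

/-- multiplication by `X - C r` for `r ≤ -ε`. -/
lemma MRep.mul_X_sub_C {ε r : ℝ} (hr : r ≤ -ε) {d : ℕ} {p : ℝ[X]} (hp : MRep ε d p) :
    MRep ε (d + 1) ((X - C r) * p) := by
  have hC : C (-r) = C ε + C (-ε - r) := by
    rw [← Polynomial.C_add, show ε + (-ε - r) = -r by ring]
  have h2 : (X - C r) * p = (X + C ε) * p + C (-ε - r) * p := by
    rw [← add_mul, sub_eq_add_neg, ← Polynomial.C_neg, hC]; ring
  rw [h2]
  exact MRep.add hp.mul_XaddC ((hp.const_mul (by linarith)).mono (by omega))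

/-- multiplication by `C r - X` for `ε ≤ r`. -/
lemma MRep.mul_C_sub_X {ε r : ℝ} (hr : ε ≤ r) {d : ℕ} {p : ℝ[X]} (hp : MRep ε d p) :
    MRep ε (d + 1) ((C r - X) * p) := by
  have hC : C r = C ε + C (r - ε) := by
    rw [← Polynomial.C_add, show ε + (r - ε) = r by ring]
  have h2 : (C r - X) * p = (C ε - X) * p + C (r - ε) * p := by
    rw [← add_mul, hC]; ring
  rw [h2]
  exact MRep.add hp.mul_CsubX ((hp.const_mul (by linarith)).mono (by omega))

lemma nonneg_Icc_of_Ioo {a b : ℝ} (hab : a < b) {g : ℝ[X]}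
    (h : ∀ x ∈ Ioo a b, 0 ≤ g.eval x) : ∀ x ∈ Icc a b, 0 ≤ g.eval x := by
  have hcl : IsClosed {x : ℝ | 0 ≤ g.eval x} :=
    isClosed_le continuous_const g.continuous
  have : Icc a b ⊆ {x : ℝ | 0 ≤ g.eval x} := by
    rw [← closure_Ioo hab.ne]
    exact hcl.closure_subset_iff.2 h
  exact fun x hx => this hx

lemma nonneg_Icc_of_Ioo' {a b r : ℝ} (hab : a < b) (hr : r ∈ Ioo a b) {g : ℝ[X]}
    (h : ∀ x ∈ Ioo a b, x ≠ r → 0 ≤ g.eval x) : ∀ x ∈ Icc a b, 0 ≤ g.eval x := by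
  intro x hx
  rcases le_or_gt x r with hxr | hxr
  · refine nonneg_Icc_of_Ioo hr.1 (fun y hy => h y ⟨hy.1, hy.2.trans hr.2⟩ hy.2.ne) x ⟨hx.1, hxr⟩
  · exact nonneg_Icc_of_Ioo hr.2 (fun y hy => h y ⟨hr.1.trans hy.1, hy.2⟩ hy.1.ne')
      x ⟨hxr.le, hx.2⟩
lemma mrep_of_nonneg {ε : ℝ} (hε : 0 < ε) (d : ℕ) :
    ∀ p : ℝ[X], p.natDegree ≤ d → (∀ x ∈ Icc (-ε) ε, 0 ≤ p.eval x) → MRep ε d p := by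
  induction d using Nat.strong_induction_on with
  | _ d IH =>
  intro p hdeg hpos
  rcases eq_or_ne p 0 with rfl | hp0
  · exact MRep.zero d
  rcases Nat.eq_zero_or_pos p.natDegree with hd0 | hdpos
  · -- constant polynomial
    have hc : p = C (p.coeff 0) := Polynomial.eq_C_of_natDegree_eq_zero hd0
    have h0 : 0 ≤ p.coeff 0 := by
      have h := hpos 0 ⟨by linarith, by linarith⟩
      rw [hc, Polynomial.eval_C] at h
      exact h
    have hsq : p = (C (Real.sqrt (p.coeff 0))) ^ 2 := by
      rw [← Polynomial.C_pow, Real.sq_sqrt h0, ← hc]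
    rw [hsq]
    exact MRep.sq d _ (by simp)
  · have hdeg0 : p.degree ≠ 0 := (Polynomial.natDegree_pos_iff_degree_pos.mp hdpos).ne'
    obtain ⟨z, hz⟩ := IsAlgClosed.exists_aeval_eq_zero ℂ p hdeg0
    rcases eq_or_ne z.im 0 with him | him
    · -- real root r := z.re
      set r := z.re with hrdef
      have hzr : (algebraMap ℝ ℂ) r = z := by
        apply Complex.ext <;> simp [him.symm, hrdef]
      have hroot : p.IsRoot r := by
        have h1 : algebraMap ℝ ℂ (p.eval r) = 0 := by
          rw [← Polynomial.aeval_algebraMap_apply_eq_algebraMap_eval, hzr]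
          exact hz
        have h2 : algebraMap ℝ ℂ (p.eval r) = algebraMap ℝ ℂ 0 := by simpa using h1
        exact (algebraMap ℝ ℂ).injective h2
      obtain ⟨g, hg⟩ := Polynomial.dvd_iff_isRoot.mpr hroot
      have hgne : g ≠ 0 := by rintro rfl; rw [mul_zero] at hg; exact hp0 hg
      have hdg : p.natDegree = g.natDegree + 1 := by
        rw [hg, Polynomial.natDegree_mul (Polynomial.X_sub_C_ne_zero r) hgne,
          Polynomial.natDegree_X_sub_C]
        ring
      rcases le_or_gt r (-ε) with hr | hr1
      · -- root to the left of the interval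
        have hgpos : ∀ x ∈ Icc (-ε) ε, 0 ≤ g.eval x := by
          refine nonneg_Icc_of_Ioo (by linarith) (fun x hx => ?_)
          have h1 : 0 < x - r := by have := hx.1; linarith
          have h2 := hpos x ⟨hx.1.le, hx.2.le⟩
          rw [hg, Polynomial.eval_mul, Polynomial.eval_sub, Polynomial.eval_X,
            Polynomial.eval_C] at h2
          nlinarith
        obtain ⟨d', rfl⟩ := Nat.exists_eq_add_of_le (hdpos.trans_le hdeg : 1 ≤ d)
        have hgd : g.natDegree ≤ d' := by omega
        have := ((IH d' (by omega) g hgd hgpos).mul_X_sub_C hr).mono (by omega : d' + 1 ≤ 1 + d')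
        rwa [← hg] at this
      · rcases le_or_gt ε r with hr | hr2
        · -- root to the right of the interval
          have hgpos : ∀ x ∈ Icc (-ε) ε, 0 ≤ (-g).eval x := by
            refine nonneg_Icc_of_Ioo (by linarith) (fun x hx => ?_)
            have h1 : x - r < 0 := by have := hx.2; linarith
            have h2 := hpos x ⟨hx.1.le, hx.2.le⟩
            rw [hg, Polynomial.eval_mul, Polynomial.eval_sub, Polynomial.eval_X,
              Polynomial.eval_C] at h2
            rw [Polynomial.eval_neg]
            nlinarith
          obtain ⟨d', rfl⟩ := Nat.exists_eq_add_of_le (hdpos.trans_le hdeg : 1 ≤ d)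
          have hgd : (-g).natDegree ≤ d' := by rw [Polynomial.natDegree_neg]; omega
          have h3 := ((IH d' (by omega) (-g) hgd hgpos).mul_C_sub_X hr).mono
            (by omega : d' + 1 ≤ 1 + d')
          have h4 : (C r - X) * -g = p := by rw [hg]; ring
          rwa [h4] at h3
        · -- root inside the interval: double root
          have hlm : IsLocalMin (fun x => p.eval x) r := by
            have hmem : Ioo (-ε) ε ∈ nhds r := isOpen_Ioo.mem_nhds ⟨hr1, hr2⟩
            refine Filter.eventually_of_mem hmem fun x hx => ?_
            simp only
            rw [hroot]
            exact hpos x ⟨hx.1.le, hx.2.le⟩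
          have hder : p.derivative.eval r = 0 := by
            have h := hlm.deriv_eq_zero
            rwa [Polynomial.deriv] at h
          have hgroot : g.IsRoot r := by
            have hd2 : p.derivative = g + (X - C r) * g.derivative := by
              rw [hg, Polynomial.derivative_mul, Polynomial.derivative_X_sub_C, one_mul]
            have := hder
            rw [hd2] at this
            simpa using this
          obtain ⟨g1, hg1⟩ := Polynomial.dvd_iff_isRoot.mpr hgroot
          have hpg1 : p = (X - C r) ^ 2 * g1 := by rw [hg, hg1]; ring
          have hg1ne : g1 ≠ 0 := by rintro rfl; rw [mul_zero] at hpg1; exact hp0 hpg1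
          have hdg1 : p.natDegree = g1.natDegree + 2 := by
            rw [hpg1, Polynomial.natDegree_mul (pow_ne_zero 2 (Polynomial.X_sub_C_ne_zero r))
              hg1ne, Polynomial.natDegree_pow, Polynomial.natDegree_X_sub_C]
            ring
          have hg1pos : ∀ x ∈ Icc (-ε) ε, 0 ≤ g1.eval x := by
            refine nonneg_Icc_of_Ioo' (by linarith) (⟨hr1, hr2⟩ : r ∈ Ioo (-ε) ε)
              (fun x hx hxr => ?_)
            have h1 : 0 < (x - r) ^ 2 := pow_two_pos_of_ne_zero (sub_ne_zero.2 hxr)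
            have h2 := hpos x ⟨hx.1.le, hx.2.le⟩
            rw [hpg1, Polynomial.eval_mul, Polynomial.eval_pow, Polynomial.eval_sub,
              Polynomial.eval_X, Polynomial.eval_C] at h2
            nlinarith
          obtain ⟨d', rfl⟩ := Nat.exists_eq_add_of_le (show 2 ≤ d by omega)
          have hg1d : g1.natDegree ≤ d' := by omega
          have h5 := ((IH d' (by omega) g1 hg1d hg1pos).mul_sq (X - C r) (m := 1)
            (by rw [Polynomial.natDegree_X_sub_C])).mono (by omega : d' + 2 * 1 ≤ 2 + d')
          rwa [← hpg1] at h5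
    · -- complex root: quadratic factor
      obtain ⟨g, hg⟩ := Polynomial.quadratic_dvd_of_aeval_eq_zero_im_ne_zero p hz him
      set Q : ℝ[X] := X ^ 2 - C (2 * z.re) * X + C (‖z‖ ^ 2) with hQdef
      have hnormsq : ‖z‖ ^ 2 = z.re ^ 2 + z.im ^ 2 := by
        rw [Complex.sq_norm, Complex.normSq_apply]; ring
      have hQalt : Q = (X - C z.re) ^ 2 + C (z.im ^ 2) := by
        rw [hQdef, hnormsq]
        simp only [map_add, map_mul, map_pow, map_ofNat]
        ring
      have hQpos : ∀ x : ℝ, 0 < Q.eval x := by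
        intro x
        rw [hQalt]
        simp only [Polynomial.eval_add, Polynomial.eval_pow, Polynomial.eval_sub,
          Polynomial.eval_X, Polynomial.eval_C]
        have h1 : 0 < z.im ^ 2 := pow_two_pos_of_ne_zero him
        nlinarith [sq_nonneg (x - z.re)]
      have hQne : Q ≠ 0 := fun h => by
        have := hQpos 0
        rw [h] at this
        simp at this
      have hgne : g ≠ 0 := by rintro rfl; rw [mul_zero] at hg; exact hp0 hg
      have hQ2 : Q.natDegree = 2 := by
        have : Q = C 1 * X ^ 2 + C (-(2 * z.re)) * X + C (‖z‖ ^ 2) := by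
          rw [hQdef]; simp only [map_neg, map_one]; ring
        rw [this]
        exact Polynomial.natDegree_quadratic one_ne_zero
      have hdg : p.natDegree = g.natDegree + 2 := by
        rw [hg, Polynomial.natDegree_mul hQne hgne, hQ2]; ring
      have hgpos : ∀ x ∈ Icc (-ε) ε, 0 ≤ g.eval x := by
        intro x hx
        have h2 := hpos x hx
        rw [hg, Polynomial.eval_mul] at h2
        nlinarith [hQpos x]
      obtain ⟨d', rfl⟩ := Nat.exists_eq_add_of_le (show 2 ≤ d by omega)
      have hgd : g.natDegree ≤ d' := by omega
      have hrep := IH d' (by omega) g hgd hgpos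
      have h6 : p = (X - C z.re) ^ 2 * g + C (z.im ^ 2) * g := by
        rw [hg, hQalt]; ring
      rw [h6]
      exact MRep.add
        ((hrep.mul_sq (X - C z.re) (m := 1) (by rw [Polynomial.natDegree_X_sub_C])).mono
          (by omega : d' + 2 * 1 ≤ 2 + d'))
        ((hrep.const_mul (sq_nonneg z.im)).mono (by omega))


lemma LF_sub (t : ℕ → ℝ) (N : ℕ) (p q : ℝ[X]) : LF t N (p - q) = LF t N p - LF t N q := by
  simp [LF, sub_mul, Finset.sum_sub_distrib]

lemma quad_eval {k : ℕ} (M : Matrix (Fin (k+1)) (Fin (k+1)) ℝ) (c : Fin (k+1) → ℝ) :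
    dotProduct c (M.mulVec c) = ∑ i, ∑ j, c i * c j * M i j := by
  simp only [dotProduct, Matrix.mulVec, Finset.mul_sum]
  exact Finset.sum_congr rfl fun i _ => Finset.sum_congr rfl fun j _ => by ring

lemma psd_quad {M : Matrix (Fin (k+1)) (Fin (k+1)) ℝ} (hM : M.PosSemidef)
    (c : Fin (k+1) → ℝ) : 0 ≤ ∑ i, ∑ j, c i * c j * M i j := by
  have h := hM.dotProduct_mulVec_nonneg c
  rw [show star c = c from star_trivial c] at h
  rwa [quad_eval] at h

lemma keyA {t : ℕ → ℝ} {k : ℕ} {ε : ℝ}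
    (hA : (ε • hankel t 0 k - hankel t 1 k).PosSemidef) {q : ℝ[X]} (hq : q.natDegree ≤ k) :
    0 ≤ LF t (2*k+2) ((C ε - X) * q ^ 2) := by
  have hexp : (C ε - X) * q ^ 2 = C ε * (X ^ 0 * q ^ 2) - X ^ 1 * q ^ 2 := by ring
  rw [hexp, LF_sub, LF_C_mul, LF_sq t 0 (by omega) q hq, LF_sq t 1 (by omega) q hq]
  have h := psd_quad hA (fun i : Fin (k+1) => q.coeff i)
  rw [Finset.mul_sum, ← Finset.sum_sub_distrib]
  refine le_trans h (le_of_eq ?_)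
  refine Finset.sum_congr rfl fun i _ => ?_
  rw [Finset.mul_sum, ← Finset.sum_sub_distrib]
  refine Finset.sum_congr rfl fun j _ => ?_
  simp only [hankel, Matrix.sub_apply, Matrix.smul_apply, Matrix.of_apply, smul_eq_mul]
  ring

lemma keyB {t : ℕ → ℝ} {k : ℕ} {ε : ℝ}
    (hB : (hankel t 1 k + ε • hankel t 0 k).PosSemidef) {q : ℝ[X]} (hq : q.natDegree ≤ k) :
    0 ≤ LF t (2*k+2) ((X + C ε) * q ^ 2) := by
  have hexp : (X + C ε) * q ^ 2 = C ε * (X ^ 0 * q ^ 2) + X ^ 1 * q ^ 2 := by ring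
  rw [hexp, LF_add, LF_C_mul, LF_sq t 0 (by omega) q hq, LF_sq t 1 (by omega) q hq]
  have h := psd_quad hB (fun i : Fin (k+1) => q.coeff i)
  rw [Finset.mul_sum, ← Finset.sum_add_distrib]
  refine le_trans h (le_of_eq ?_)
  refine Finset.sum_congr rfl fun i _ => ?_
  rw [Finset.mul_sum, ← Finset.sum_add_distrib]
  refine Finset.sum_congr rfl fun j _ => ?_
  simp only [hankel, Matrix.add_apply, Matrix.smul_apply, Matrix.of_apply, smul_eq_mul]
  ring

lemma key0 {t : ℕ → ℝ} {k : ℕ} {ε : ℝ} (hε : 0 < ε)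
    (hA : (ε • hankel t 0 k - hankel t 1 k).PosSemidef)
    (hB : (hankel t 1 k + ε • hankel t 0 k).PosSemidef)
    {q : ℝ[X]} (hq : q.natDegree ≤ k) : 0 ≤ LF t (2*k+2) (q ^ 2) := by
  have hid : (C ε - X) * q ^ 2 + (X + C ε) * q ^ 2 = C ε * q ^ 2 + C ε * q ^ 2 := by ring
  have h := add_nonneg (keyA hA hq) (keyB hB hq)
  rw [← LF_add, hid, LF_add, LF_C_mul] at h
  nlinarith

lemma keyBoth {t : ℕ → ℝ} {k : ℕ} {ε : ℝ} (hε : 0 < ε)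
    (hA : (ε • hankel t 0 k - hankel t 1 k).PosSemidef)
    (hB : (hankel t 1 k + ε • hankel t 0 k).PosSemidef)
    {q : ℝ[X]} (hq : q.natDegree + 1 ≤ k) :
    0 ≤ LF t (2*k+2) ((C ε - X) * ((X + C ε) * q ^ 2)) := by
  have hq1 : ((C ε - X) * q).natDegree ≤ k :=
    le_trans (natDegree_mul_le_one_add (ε := ε) _ q (natDegree_CsubX_le ε)) (by omega)
  have hq2 : ((X + C ε) * q).natDegree ≤ k :=
    le_trans (natDegree_mul_le_one_add (ε := ε) _ q (natDegree_XaddC_le ε)) (by omega)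
  have hid : (X + C ε) * ((C ε - X) * q) ^ 2 + (C ε - X) * ((X + C ε) * q) ^ 2 =
      C ε * ((C ε - X) * ((X + C ε) * q ^ 2)) + C ε * ((C ε - X) * ((X + C ε) * q ^ 2)) := by
    ring
  have h := add_nonneg (keyB hB hq1) (keyA hA hq2)
  rw [← LF_add, hid, LF_add, LF_C_mul] at h
  nlinarith

lemma LF_nonneg {t : ℕ → ℝ} {k : ℕ} {ε : ℝ} (hε : 0 < ε)
    (hA : (ε • hankel t 0 k - hankel t 1 k).PosSemidef)
    (hB : (hankel t 1 k + ε • hankel t 0 k).PosSemidef)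
    {d : ℕ} {p : ℝ[X]} (hp : MRep ε d p) (hd : d ≤ 2*k+1) :
    0 ≤ LF t (2*k+2) p := by
  induction hp with
  | zero => simp [LF]
  | add _ _ ih1 ih2 => rw [LF_add]; exact add_nonneg ih1 ih2
  | sq q h => exact key0 hε hA hB (by omega)
  | pos q h => exact keyB hB (by omega)
  | neg q h => exact keyA hA (by omega)
  | both q h => exact keyBoth hε hA hB (by omega)

noncomputable section KsetSection

def curveMap (n : ℕ) (y : ℝ) : Fin n → ℝ := fun j => y ^ (j : ℕ)

lemma continuous_curveMap (n : ℕ) : Continuous (curveMap n) :=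
  continuous_pi fun _ => continuous_pow _

def Kset (n : ℕ) (ε : ℝ) : Set (Fin n → ℝ) :=
  {v | ∃ w x : Fin (n + 1) → ℝ, (∀ i, 0 ≤ w i) ∧ ∑ i, w i = 1 ∧
    (∀ i, x i ∈ Icc (-ε) ε) ∧ v = ∑ i, w i • curveMap n (x i)}

lemma isCompact_Kset (n : ℕ) (ε : ℝ) : IsCompact (Kset n ε) := by
  have hD : IsCompact ((stdSimplex ℝ (Fin (n + 1))) ×ˢ
      (Set.univ.pi fun _ : Fin (n + 1) => Icc (-ε) ε)) :=
    (isCompact_stdSimplex (𝕜 := ℝ) (ι := Fin (n + 1))).prod (isCompact_univ_pi fun _ => isCompact_Icc)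
  have hT : Continuous (fun p : (Fin (n + 1) → ℝ) × (Fin (n + 1) → ℝ) =>
      ∑ i, p.1 i • curveMap n (p.2 i)) := by
    apply continuous_finset_sum
    intro i _
    exact ((continuous_apply i).comp continuous_fst).smul
      ((continuous_curveMap n).comp ((continuous_apply i).comp continuous_snd))
  have himg : Kset n ε = (fun p : (Fin (n + 1) → ℝ) × (Fin (n + 1) → ℝ) =>
      ∑ i, p.1 i • curveMap n (p.2 i)) ''
      ((stdSimplex ℝ (Fin (n + 1))) ×ˢ (Set.univ.pi fun _ : Fin (n + 1) => Icc (-ε) ε)) := by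
    ext v
    constructor
    · rintro ⟨w, x, hw, hsum, hx, rfl⟩
      exact ⟨(w, x), ⟨⟨hw, hsum⟩, fun i _ => hx i⟩, rfl⟩
    · rintro ⟨⟨w, x⟩, ⟨⟨hw, hsum⟩, hx⟩, rfl⟩
      exact ⟨w, x, hw, hsum, fun i => hx i (Set.mem_univ i), rfl⟩
  rw [himg]
  exact hD.image hT

lemma Kset_subset_hull (n : ℕ) (ε : ℝ) :
    Kset n ε ⊆ convexHull ℝ (curveMap n '' Icc (-ε) ε) := by
  rintro v ⟨w, x, hw, hsum, hx, rfl⟩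
  exact Convex.sum_mem (convex_convexHull ℝ _) (fun i _ => hw i) hsum
    (fun i _ => subset_convexHull ℝ _ ⟨x i, hx i, rfl⟩)

lemma hull_subset_Kset {n : ℕ} {ε : ℝ} (hε : 0 < ε) :
    convexHull ℝ (curveMap n '' Icc (-ε) ε) ⊆ Kset n ε := by
  classical
  intro v hv
  obtain ⟨ι, hι, z, w, hzs, hai, hwpos, hwsum, hvsum⟩ :=
    eq_pos_convex_span_of_mem_convexHull hv
  have hne : Nonempty ι := by
    by_contra h
    rw [not_nonempty_iff] at h
    rw [Finset.univ_eq_empty, Finset.sum_empty] at hwsum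
    norm_num at hwsum
  have hcard : Fintype.card ι ≤ n + 1 := by
    have h1 := hai.finrank_vectorSpan_add_one
    have h2 : Module.finrank ℝ (vectorSpan ℝ (Set.range z)) ≤ n := by
      refine le_trans (Submodule.finrank_le _) ?_
      rw [Module.finrank_fin_fun]
    omega
  obtain ⟨e⟩ := Function.Embedding.nonempty_of_card_le
    (show Fintype.card ι ≤ Fintype.card (Fin (n + 1)) by simpa using hcard)
  choose y hy hcy using fun i => (hzs ⟨i, rfl⟩ : z i ∈ curveMap n '' Icc (-ε) ε)
  set w' : Fin (n + 1) → ℝ := fun m => if h : ∃ i, e i = m then w h.choose else 0 with hw'def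
  set x' : Fin (n + 1) → ℝ := fun m => if h : ∃ i, e i = m then y h.choose else 0 with hx'def
  have hwe : ∀ i, w' (e i) = w i := by
    intro i
    have h : ∃ i', e i' = e i := ⟨i, rfl⟩
    rw [hw'def]
    simp only [dif_pos h]
    exact congrArg w (e.injective h.choose_spec)
  have hxe : ∀ i, x' (e i) = y i := by
    intro i
    have h : ∃ i', e i' = e i := ⟨i, rfl⟩
    rw [hx'def]
    simp only [dif_pos h]
    exact congrArg y (e.injective h.choose_spec)
  have hmem : ∀ m, m ∉ Finset.univ.image e → w' m = 0 := by
    intro m hm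
    rw [hw'def]
    refine dif_neg fun ⟨i, hi⟩ => hm ?_
    exact Finset.mem_image.2 ⟨i, Finset.mem_univ i, hi⟩
  refine ⟨w', x', ?_, ?_, ?_, ?_⟩
  · intro m
    rw [hw'def]
    simp only
    split
    · exact (hwpos _).le
    · exact le_rfl
  · rw [← Finset.sum_subset (Finset.subset_univ (Finset.univ.image e))
      (fun m _ hm => hmem m hm), Finset.sum_image (fun i _ j _ h => e.injective h)]
    rw [← hwsum]
    exact Finset.sum_congr rfl fun i _ => hwe i
  · intro m
    rw [hx'def]
    simp only
    split
    · exact hy _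
    · exact ⟨by linarith, by linarith⟩
  · rw [← Finset.sum_subset (Finset.subset_univ (Finset.univ.image e))
      (fun m _ hm => by rw [hmem m hm, zero_smul]),
      Finset.sum_image (fun i _ j _ h => e.injective h)]
    rw [← hvsum]
    refine Finset.sum_congr rfl fun i _ => ?_
    rw [hwe i, hxe i, hcy i]

end KsetSection

open MeasureTheory in
lemma hard_direction {k : ℕ} {ε : ℝ} (hε : 0 < ε) {t : ℕ → ℝ} (ht0 : t 0 = 1)
    (hA : (ε • hankel t 0 k - hankel t 1 k).PosSemidef)
    (hB : (hankel t 1 k + ε • hankel t 0 k).PosSemidef) :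
    ∃ μ : Measure ℝ, IsProbabilityMeasure μ ∧ μ (Set.Icc (-ε) ε) = 1 ∧
      ∀ j, 1 ≤ j → j ≤ 2 * k + 1 → t j = ∫ y, y ^ j ∂μ := by
  classical
  set n : ℕ := 2 * k + 2 with hn
  set v : Fin n → ℝ := fun j => t j with hv
  have hKeq : Kset n ε = convexHull ℝ (curveMap n '' Icc (-ε) ε) :=
    Set.Subset.antisymm (Kset_subset_hull n ε) (hull_subset_Kset hε)
  -- step 1 : v ∈ Kset
  have hvK : v ∈ Kset n ε := by
    by_contra hvK
    obtain ⟨f, u, hfu, hufv⟩ := geometric_hahn_banach_closed_point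
      (hKeq ▸ convex_convexHull ℝ _) (isCompact_Kset n ε).isClosed hvK
    set a : Fin n → ℝ := fun j => f (Pi.single j 1 : Fin n → ℝ) with ha
    have hf : ∀ yv : Fin n → ℝ, f yv = ∑ j, yv j * a j := by
      intro yv
      have h1 : yv = ∑ j, yv j • (Pi.single j 1 : Fin n → ℝ) := by
        conv_lhs => rw [pi_eq_sum_univ yv]
        refine Finset.sum_congr rfl fun j _ => ?_
        congr 1
        funext j'
        simp [Pi.single_apply, eq_comm]
      conv_lhs => rw [h1]
      rw [map_sum]
      refine Finset.sum_congr rfl fun j _ => ?_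
      rw [_root_.map_smul, smul_eq_mul]
    set P : ℝ[X] := C u - ∑ j : Fin n, C (a j) * X ^ (j : ℕ) with hP
    have hPdeg : P.natDegree ≤ 2 * k + 1 := by
      rw [hP]
      refine le_trans (Polynomial.natDegree_sub_le _ _) ?_
      rw [max_le_iff]
      constructor
      · simp
      · refine Polynomial.natDegree_sum_le_of_forall_le _ _ fun j _ => ?_
        refine le_trans (Polynomial.natDegree_C_mul_X_pow_le _ _) ?_
        have := j.isLt
        omega
    have hPpos : ∀ x ∈ Icc (-ε) ε, 0 ≤ P.eval x := by
      intro x hx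
      have hcx : curveMap n x ∈ Kset n ε := by
        rw [hKeq]
        exact subset_convexHull ℝ _ ⟨x, hx, rfl⟩
      have h2 := hfu _ hcx
      rw [hf] at h2
      have h3 : P.eval x = u - ∑ j : Fin n, a j * x ^ (j : ℕ) := by
        rw [hP]
        simp [Polynomial.eval_finset_sum]
      rw [h3]
      have h4 : ∑ j : Fin n, curveMap n x j * a j = ∑ j : Fin n, a j * x ^ (j : ℕ) := by
        refine Finset.sum_congr rfl fun j _ => ?_
        rw [curveMap, mul_comm]
      rw [h4] at h2
      linarith
    have hLF : 0 ≤ LF t (2 * k + 2) P :=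
      LF_nonneg hε hA hB (mrep_of_nonneg hε (2 * k + 1) P hPdeg hPpos) le_rfl
    have hcomp : LF t (2 * k + 2) P = u - f v := by
      rw [hP, LF_sub, hf]
      have h5 : LF t (2 * k + 2) (C u) = u := by
        rw [← Polynomial.monomial_zero_left, LF_monomial t (by omega), ht0, mul_one]
      have h6 : LF t (2 * k + 2) (∑ j : Fin n, C (a j) * X ^ (j : ℕ)) =
          ∑ j : Fin n, a j * t j := by
        rw [LF_sum]
        refine Finset.sum_congr rfl fun j _ => ?_
        rw [Polynomial.C_mul_X_pow_eq_monomial, LF_monomial t (by omega : (j:ℕ) < 2*k+2)]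
      rw [h5, h6]
      congr 1
      refine Finset.sum_congr rfl fun j _ => ?_
      rw [mul_comm]
    rw [hcomp] at hLF
    linarith
  -- step 2 : build the measure
  obtain ⟨w, x, hw, hwsum, hx, hveq⟩ := hvK
  set μ : Measure ℝ := ∑ i : Fin (n + 1), ENNReal.ofReal (w i) • Measure.dirac (x i) with hμ
  have hμs : ∀ (s : Set ℝ), μ s = ∑ i : Fin (n+1), ENNReal.ofReal (w i) • Measure.dirac (x i) s := by
    intro s
    rw [hμ, Measure.finset_sum_apply]
    simp [Measure.smul_apply]
  have hsum1 : ∑ i : Fin (n+1), ENNReal.ofReal (w i) = 1 := by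
    rw [← ENNReal.ofReal_sum_of_nonneg (fun i _ => hw i), hwsum, ENNReal.ofReal_one]
  have hprob : IsProbabilityMeasure μ := by
    constructor
    rw [hμs]
    simp only [Measure.dirac_apply_of_mem (Set.mem_univ _), smul_eq_mul, mul_one]
    exact hsum1
  have hIcc : μ (Set.Icc (-ε) ε) = 1 := by
    rw [hμs]
    simp only [Measure.dirac_apply_of_mem (hx _), smul_eq_mul, mul_one]
    exact hsum1
  refine ⟨μ, hprob, hIcc, fun j hj1 hj2 => ?_⟩
  have hint : ∫ y, y ^ j ∂μ = ∑ i : Fin (n+1), w i * (x i) ^ j := by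
    rw [hμ, integral_finset_sum_measure (fun i _ => ?_)]
    · refine Finset.sum_congr rfl fun i _ => ?_
      rw [integral_smul_measure, integral_dirac, ENNReal.toReal_ofReal (hw i), smul_eq_mul]
    · exact ((integrable_const ((x i) ^ j)).congr (ae_eq_dirac (fun y : ℝ => y ^ j)).symm).smul_measure
        ENNReal.ofReal_ne_top
  rw [hint]
  have hj : t j = v ⟨j, by omega⟩ := by rw [hv]
  rw [hj, hveq]
  rw [Finset.sum_apply]
  refine Finset.sum_congr rfl fun i _ => ?_
  simp [curveMap]

lemma herm_of_symm {m : ℕ} {M : Matrix (Fin m) (Fin m) ℝ} (h : ∀ i j, M i j = M j i) :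
    M.IsHermitian := by
  apply Matrix.ext
  intro i j
  rw [Matrix.conjTranspose_apply, star_trivial, h]

open MeasureTheory in
lemma moment_quad {k : ℕ} {t : ℕ → ℝ} {μ : Measure ℝ}
    (hint : ∀ m : ℕ, Integrable (fun y => y ^ m) μ)
    (hmom : ∀ m ≤ 2 * k + 1, t m = ∫ y, y ^ m ∂μ)
    {s : ℕ} (hs : s ≤ 1) (c : Fin (k + 1) → ℝ) :
    ∑ i : Fin (k+1), ∑ j : Fin (k+1), c i * c j * t (s + (i:ℕ) + (j:ℕ)) =
      ∫ y, y ^ s * (∑ i : Fin (k+1), c i * y ^ (i : ℕ)) ^ 2 ∂μ := by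
  have hF : ∀ y : ℝ, y ^ s * (∑ i : Fin (k+1), c i * y ^ (i:ℕ)) ^ 2 =
      ∑ i : Fin (k+1), ∑ j : Fin (k+1), c i * c j * y ^ (s + (i:ℕ) + (j:ℕ)) := by
    intro y
    rw [sq, Finset.sum_mul_sum, Finset.mul_sum]
    refine Finset.sum_congr rfl fun i _ => ?_
    rw [Finset.mul_sum]
    refine Finset.sum_congr rfl fun j _ => ?_
    rw [pow_add, pow_add]
    ring
  have hrhs : (fun y : ℝ => y ^ s * (∑ i : Fin (k+1), c i * y ^ (i:ℕ)) ^ 2) =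
      fun y => ∑ i : Fin (k+1), ∑ j : Fin (k+1), c i * c j * y ^ (s + (i:ℕ) + (j:ℕ)) :=
    funext hF
  have houter := integral_finset_sum (μ := μ) Finset.univ
    (f := fun (i : Fin (k+1)) (y : ℝ) => ∑ j : Fin (k+1), c i * c j * y ^ (s + (i:ℕ) + (j:ℕ)))
    (fun i _ => integrable_finset_sum _ (fun j _ => (hint (s + (i:ℕ) + (j:ℕ))).const_mul _))
  rw [hrhs, houter]
  refine Finset.sum_congr rfl fun i _ => ?_
  have hinner := integral_finset_sum (μ := μ) Finset.univ
    (f := fun (j : Fin (k+1)) (y : ℝ) => c i * c j * y ^ (s + (i:ℕ) + (j:ℕ)))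
    (fun j _ => (hint (s + (i:ℕ) + (j:ℕ))).const_mul _)
  rw [hinner]
  refine Finset.sum_congr rfl fun j _ => ?_
  have : (fun y : ℝ => c i * c j * y ^ (s + (i:ℕ) + (j:ℕ)))
      = fun y => (c i * c j) * y ^ (s + (i:ℕ) + (j:ℕ)) := rfl
  rw [this, integral_const_mul, hmom (s + (i:ℕ) + (j:ℕ))
    (by have := i.isLt; have := j.isLt; omega)]

open MeasureTheory in
lemma easy_direction {k : ℕ} {ε : ℝ} (hε : 0 < ε) {t : ℕ → ℝ} (ht0 : t 0 = 1)
    {μ : Measure ℝ} (hprob : IsProbabilityMeasure μ) (hIcc : μ (Set.Icc (-ε) ε) = 1)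
    (hm : ∀ j, 1 ≤ j → j ≤ 2 * k + 1 → t j = ∫ y, y ^ j ∂μ) :
    ((ε • hankel t 0 k - hankel t 1 k).PosSemidef ∧
      (hankel t 1 k + ε • hankel t 0 k).PosSemidef) := by
  have hae : ∀ᵐ y ∂μ, y ∈ Icc (-ε) ε := by
    have hcompl : μ (Icc (-ε) ε)ᶜ = 0 := by
      rw [measure_compl measurableSet_Icc (measure_ne_top μ _), hIcc, measure_univ, tsub_self]
    exact Filter.mem_of_superset (MeasureTheory.mem_ae_iff.mpr hcompl) (fun y hy => hy)
  have hint : ∀ m : ℕ, Integrable (fun y : ℝ => y ^ m) μ := by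
    intro m
    refine Integrable.mono' (integrable_const (ε ^ m)) ((continuous_pow m).aestronglyMeasurable) ?_
    filter_upwards [hae] with y hy
    rw [Real.norm_eq_abs, abs_pow]
    refine pow_le_pow_left₀ (abs_nonneg y) ?_ m
    rw [abs_le]
    exact ⟨hy.1, hy.2⟩
  have hmom : ∀ m ≤ 2 * k + 1, t m = ∫ y, y ^ m ∂μ := by
    intro m hm'
    rcases Nat.eq_zero_or_pos m with rfl | hmpos
    · rw [ht0]
      simp [integral_const, measure_univ]
    · exact hm m hmpos hm'
  constructor
  · refine Matrix.PosSemidef.of_dotProduct_mulVec_nonneg ?_ ?_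
    · refine herm_of_symm fun i j => ?_
      simp only [Matrix.sub_apply, Matrix.smul_apply, hankel, Matrix.of_apply, smul_eq_mul]
      rw [show 0 + (i:ℕ) + (j:ℕ) = 0 + (j:ℕ) + (i:ℕ) by omega,
        show 1 + (i:ℕ) + (j:ℕ) = 1 + (j:ℕ) + (i:ℕ) by omega]
    · intro c
      rw [star_trivial, quad_eval]
      have hentry : ∀ i j : Fin (k+1), (ε • hankel t 0 k - hankel t 1 k) i j =
          ε * t (0 + (i:ℕ) + (j:ℕ)) - t (1 + (i:ℕ) + (j:ℕ)) := by
        intro i j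
        simp [hankel, Matrix.sub_apply, Matrix.smul_apply, smul_eq_mul]
      have hsplit : ∑ i, ∑ j, c i * c j * ((ε • hankel t 0 k - hankel t 1 k) i j) =
          ε * (∑ i : Fin (k+1), ∑ j : Fin (k+1), c i * c j * t (0 + (i:ℕ) + (j:ℕ)))
          - ∑ i : Fin (k+1), ∑ j : Fin (k+1), c i * c j * t (1 + (i:ℕ) + (j:ℕ)) := by
        rw [Finset.mul_sum, ← Finset.sum_sub_distrib]
        refine Finset.sum_congr rfl fun i _ => ?_
        rw [Finset.mul_sum, ← Finset.sum_sub_distrib]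
        refine Finset.sum_congr rfl fun j _ => ?_
        rw [hentry]
        ring
      rw [hsplit, moment_quad hint hmom (by omega : (0:ℕ) ≤ 1) c,
        moment_quad hint hmom (by omega : (1:ℕ) ≤ 1) c]
      have hintsq : ∀ s : ℕ, Integrable
          (fun y : ℝ => y ^ s * (∑ i : Fin (k+1), c i * y ^ (i:ℕ)) ^ 2) μ := by
        intro s
        have hF : (fun y : ℝ => y ^ s * (∑ i : Fin (k+1), c i * y ^ (i:ℕ)) ^ 2) =
            fun y => ∑ i : Fin (k+1), ∑ j : Fin (k+1), c i * c j * y ^ (s + (i:ℕ) + (j:ℕ)) := by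
          funext y
          rw [sq, Finset.sum_mul_sum, Finset.mul_sum]
          refine Finset.sum_congr rfl fun i _ => ?_
          rw [Finset.mul_sum]
          refine Finset.sum_congr rfl fun j _ => ?_
          rw [pow_add, pow_add]
          ring
        rw [hF]
        exact integrable_finset_sum _ (fun i _ => integrable_finset_sum _
          (fun j _ => (hint _).const_mul _))
      rw [← integral_const_mul ε, ← integral_sub ((hintsq 0).const_mul ε) (hintsq 1)]
      refine integral_nonneg_of_ae ?_
      filter_upwards [hae] with y hy
      have h1 : ε * (y ^ 0 * (∑ i : Fin (k+1), c i * y ^ (i:ℕ)) ^ 2)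
          - y ^ 1 * (∑ i : Fin (k+1), c i * y ^ (i:ℕ)) ^ 2
          = (ε - y) * (∑ i : Fin (k+1), c i * y ^ (i:ℕ)) ^ 2 := by ring
      rw [h1]
      exact mul_nonneg (by linarith [hy.2]) (sq_nonneg _)
  · refine Matrix.PosSemidef.of_dotProduct_mulVec_nonneg ?_ ?_
    · refine herm_of_symm fun i j => ?_
      simp only [Matrix.add_apply, Matrix.smul_apply, hankel, Matrix.of_apply, smul_eq_mul]
      rw [show 0 + (i:ℕ) + (j:ℕ) = 0 + (j:ℕ) + (i:ℕ) by omega,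
        show 1 + (i:ℕ) + (j:ℕ) = 1 + (j:ℕ) + (i:ℕ) by omega]
    · intro c
      rw [star_trivial, quad_eval]
      have hentry : ∀ i j : Fin (k+1), (hankel t 1 k + ε • hankel t 0 k) i j =
          t (1 + (i:ℕ) + (j:ℕ)) + ε * t (0 + (i:ℕ) + (j:ℕ)) := by
        intro i j
        simp [hankel, Matrix.add_apply, Matrix.smul_apply, smul_eq_mul]
      have hsplit : ∑ i, ∑ j, c i * c j * ((hankel t 1 k + ε • hankel t 0 k) i j) =
          (∑ i : Fin (k+1), ∑ j : Fin (k+1), c i * c j * t (1 + (i:ℕ) + (j:ℕ)))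
          + ε * (∑ i : Fin (k+1), ∑ j : Fin (k+1), c i * c j * t (0 + (i:ℕ) + (j:ℕ))) := by
        rw [Finset.mul_sum, ← Finset.sum_add_distrib]
        refine Finset.sum_congr rfl fun i _ => ?_
        rw [Finset.mul_sum, ← Finset.sum_add_distrib]
        refine Finset.sum_congr rfl fun j _ => ?_
        rw [hentry]
        ring
      rw [hsplit, moment_quad hint hmom (by omega : (0:ℕ) ≤ 1) c,
        moment_quad hint hmom (by omega : (1:ℕ) ≤ 1) c]
      have hintsq : ∀ s : ℕ, Integrable
          (fun y : ℝ => y ^ s * (∑ i : Fin (k+1), c i * y ^ (i:ℕ)) ^ 2) μ := by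
        intro s
        have hF : (fun y : ℝ => y ^ s * (∑ i : Fin (k+1), c i * y ^ (i:ℕ)) ^ 2) =
            fun y => ∑ i : Fin (k+1), ∑ j : Fin (k+1), c i * c j * y ^ (s + (i:ℕ) + (j:ℕ)) := by
          funext y
          rw [sq, Finset.sum_mul_sum, Finset.mul_sum]
          refine Finset.sum_congr rfl fun i _ => ?_
          rw [Finset.mul_sum]
          refine Finset.sum_congr rfl fun j _ => ?_
          rw [pow_add, pow_add]
          ring
        rw [hF]
        exact integrable_finset_sum _ (fun i _ => integrable_finset_sum _
          (fun j _ => (hint _).const_mul _))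
      rw [← integral_const_mul ε, ← integral_add (hintsq 1) ((hintsq 0).const_mul ε)]
      refine integral_nonneg_of_ae ?_
      filter_upwards [hae] with y hy
      have h1 : y ^ 1 * (∑ i : Fin (k+1), c i * y ^ (i:ℕ)) ^ 2
          + ε * (y ^ 0 * (∑ i : Fin (k+1), c i * y ^ (i:ℕ)) ^ 2)
          = (y + ε) * (∑ i : Fin (k+1), c i * y ^ (i:ℕ)) ^ 2 := by ring
      rw [h1]
      exact mul_nonneg (by linarith [hy.1]) (sq_nonneg _)


/-- Truncated moment problem on `[-ε, ε]`, odd case. -/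
theorem truncated_moment_problem_odd (k : ℕ) (ε : ℝ) (hε : 0 < ε)
    (t : ℕ → ℝ) (ht0 : t 0 = 1) :
    (∃ μ : Measure ℝ, IsProbabilityMeasure μ ∧ μ (Set.Icc (-ε) ε) = 1 ∧
        ∀ j, 1 ≤ j → j ≤ 2 * k + 1 → t j = ∫ y, y ^ j ∂μ) ↔
      ((ε • hankel t 0 k - hankel t 1 k).PosSemidef ∧
        (hankel t 1 k + ε • hankel t 0 k).PosSemidef) := by
  constructor
  · rintro ⟨μ, hprob, hIcc, hm⟩
    exact easy_direction hε ht0 hprob hIcc hm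
  · rintro ⟨hA, hB⟩
    exact hard_direction hε ht0 hA hB
end

section
/- (Necessity, odd case.) Let k ≥ 0 be a natural number, let ε > 0, and let μ be a Borel probability measure on ℝ with μ([-ε,ε]) = 1. Define t_j = ∫ y^j dμ(y) for j = 0, 1, …, 2k+1 (so t_0 = 1). Then the matrix ε·M(0, 2k, t) − M(1, 2k+1, t) is positive semidefinite and the matrix M(1, 2k+1, t) + ε·M(0, 2k, t) is positive semidefinite. -/
open MeasureTheory Matrix

/-- Necessity in the truncated moment problem on `[-ε, ε]`, odd case. -/
theorem moment_matrices_posSemidef_odd (k : ℕ) (ε : ℝ) (hε : 0 < ε)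
    (μ : Measure ℝ) [IsProbabilityMeasure μ] (hμ : μ (Set.Icc (-ε) ε) = 1)
    (t : ℕ → ℝ) (ht : ∀ j, j ≤ 2 * k + 1 → t j = ∫ y, y ^ j ∂μ) :
    (ε • hankel t 0 k - hankel t 1 k).PosSemidef ∧
      (hankel t 1 k + ε • hankel t 0 k).PosSemidef := by
  have hcompl : μ (Set.Icc (-ε) ε)ᶜ = 0 := by
    have h := measure_compl (measurableSet_Icc (a := -ε) (b := ε)) (measure_ne_top μ _)
    rw [hμ, measure_univ] at h
    simpa using h
  have hae : ∀ᵐ y ∂μ, y ∈ Set.Icc (-ε) ε := by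
    rw [ae_iff]
    exact hcompl
  have hint : ∀ n : ℕ, Integrable (fun y => y ^ n) μ := by
    intro n
    apply Integrable.mono' (integrable_const (ε ^ n))
    · exact (measurable_id.pow_const n).aestronglyMeasurable
    · filter_upwards [hae] with y hy
      have hy' : |y| ≤ ε := abs_le.2 ⟨hy.1, hy.2⟩
      calc ‖y ^ n‖ = |y| ^ n := by rw [Real.norm_eq_abs, abs_pow]
        _ ≤ ε ^ n := pow_le_pow_left₀ (abs_nonneg y) hy' n
  have expand : ∀ (a : ℕ) (x : Fin (k+1) → ℝ) (y : ℝ),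
      y ^ a * (∑ i : Fin (k+1), x i * y ^ (i:ℕ)) ^ 2
        = ∑ i : Fin (k+1), ∑ j : Fin (k+1), x i * x j * y ^ (a + (i:ℕ) + (j:ℕ)) := by
    intro a x y
    rw [sq, Finset.sum_mul_sum, Finset.mul_sum]
    refine Finset.sum_congr rfl fun i _ => ?_
    rw [Finset.mul_sum]
    refine Finset.sum_congr rfl fun j _ => ?_
    rw [pow_add, pow_add]
    ring
  have hintp : ∀ (a : ℕ) (x : Fin (k+1) → ℝ),
      Integrable (fun y => y ^ a * (∑ i : Fin (k+1), x i * y ^ (i:ℕ)) ^ 2) μ := by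
    intro a x
    simp only [expand a x]
    apply integrable_finset_sum
    intro i _
    apply integrable_finset_sum
    intro j _
    exact (hint _).const_mul _
  have key : ∀ (a : ℕ), a ≤ 1 → ∀ x : Fin (k+1) → ℝ,
      x ⬝ᵥ (hankel t a k).mulVec x
        = ∫ y, y ^ a * (∑ i : Fin (k+1), x i * y ^ (i:ℕ)) ^ 2 ∂μ := by
    intro a ha x
    have step1 : x ⬝ᵥ (hankel t a k).mulVec x
        = ∑ i : Fin (k+1), ∑ j : Fin (k+1), x i * x j * t (a + (i:ℕ) + (j:ℕ)) := by
      simp only [dotProduct, Matrix.mulVec, hankel, Matrix.of_apply]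
      refine Finset.sum_congr rfl fun i _ => ?_
      rw [Finset.mul_sum]
      refine Finset.sum_congr rfl fun j _ => ?_
      ring
    rw [step1]
    have step2 : (∫ y, y ^ a * (∑ i : Fin (k+1), x i * y ^ (i:ℕ)) ^ 2 ∂μ)
        = ∑ i : Fin (k+1), ∑ j : Fin (k+1), x i * x j * t (a + (i:ℕ) + (j:ℕ)) := by
      simp only [expand a x]
      rw [integral_finset_sum _ (fun i _ => integrable_finset_sum _
        (fun j _ => (hint _).const_mul _))]
      refine Finset.sum_congr rfl fun i _ => ?_
      rw [integral_finset_sum _ (fun j _ => (hint _).const_mul _)]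
      refine Finset.sum_congr rfl fun j _ => ?_
      rw [integral_const_mul, ht (a + (i:ℕ) + (j:ℕ)) (by have := i.is_le; have := j.is_le; omega)]
    rw [step2]
  have hherm : ∀ a, (hankel t a k).IsHermitian := by
    intro a
    ext i j
    simp only [hankel, Matrix.conjTranspose_apply, Matrix.of_apply, star_trivial]
    congr 1
    omega
  have hsm : (ε • hankel t 0 k).IsHermitian := by
    show (ε • hankel t 0 k)ᴴ = ε • hankel t 0 k
    rw [Matrix.conjTranspose_smul, star_trivial, (hherm 0).eq]
  constructor
  · refine Matrix.posSemidef_iff_dotProduct_mulVec.2 ⟨hsm.sub (hherm 1), fun x => ?_⟩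
    have hform : star x ⬝ᵥ (ε • hankel t 0 k - hankel t 1 k).mulVec x
        = ε * (x ⬝ᵥ (hankel t 0 k).mulVec x) - x ⬝ᵥ (hankel t 1 k).mulVec x := by
      simp [Matrix.sub_mulVec, Matrix.smul_mulVec, dotProduct_sub, dotProduct_smul,
        smul_eq_mul]
    rw [hform, key 0 (by norm_num) x, key 1 (le_refl 1) x, ← integral_const_mul,
      ← integral_sub ((hintp 0 x).const_mul ε) (hintp 1 x)]
    apply integral_nonneg_of_ae
    filter_upwards [hae] with y hy
    have : 0 ≤ ε - y := by linarith [hy.2]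
    have h2 : (0:ℝ) ≤ (∑ i : Fin (k+1), x i * y ^ (i:ℕ)) ^ 2 := sq_nonneg _
    simp only [Pi.zero_apply, pow_zero, pow_one, one_mul]
    nlinarith [mul_nonneg this h2]
  · refine Matrix.posSemidef_iff_dotProduct_mulVec.2 ⟨(hherm 1).add hsm, fun x => ?_⟩
    have hform : star x ⬝ᵥ (hankel t 1 k + ε • hankel t 0 k).mulVec x
        = x ⬝ᵥ (hankel t 1 k).mulVec x + ε * (x ⬝ᵥ (hankel t 0 k).mulVec x) := by
      simp [Matrix.add_mulVec, Matrix.smul_mulVec, dotProduct_add, dotProduct_smul,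
        smul_eq_mul]
    rw [hform, key 0 (by norm_num) x, key 1 (le_refl 1) x, ← integral_const_mul,
      ← integral_add (hintp 1 x) ((hintp 0 x).const_mul ε)]
    apply integral_nonneg_of_ae
    filter_upwards [hae] with y hy
    have : 0 ≤ y + ε := by linarith [hy.1]
    have h2 : (0:ℝ) ≤ (∑ i : Fin (k+1), x i * y ^ (i:ℕ)) ^ 2 := sq_nonneg _
    simp only [Pi.zero_apply, pow_zero, pow_one, one_mul]
    nlinarith [mul_nonneg this h2]
end

section
/- (Exactness of the semidefinite moment relaxation for univariate polynomial optimization on a symmetric interval.) Let k ≥ 1 be a natural number, let ε > 0, and let p = (p_0, p_1, …, p_{2k}) ∈ ℝ^{2k+1}. Then sSup { Σ_{j=0}^{2k} p_j y^j : y ∈ [-ε, ε] } = sSup { Σ_{j=0}^{2k} p_j m_j : m ∈ ℝ^{2k+1}, m_0 = 1, the Hankel matrix M(0, 2k, m) is positive semidefinite, and ε²·M(0, 2k−2, m) − M(2, 2k, m) is positive semidefinite }. -/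
open Polynomial

lemma eval_map_real (N : ℝ[X]) (r : ℝ) :
    (N.map (algebraMap ℝ ℂ)).eval (r : ℂ) = ((N.eval r : ℝ) : ℂ) := by
  rw [eval_map]
  have := eval₂_at_apply (p := N) (algebraMap ℝ ℂ) r
  simpa using this

lemma nonneg_of_sq_mul {a b c : ℝ} (h : 0 ≤ c) (hc : c = a^2 * b) (ha : a ≠ 0) : 0 ≤ b := by
  rcases le_or_gt 0 b with h'|h'
  · exact h'
  · have h2 : 0 < a^2 := by positivity
    nlinarith

/-- A polynomial nonnegative away from one point is nonnegative everywhere. -/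
lemma nonneg_eval_of_nonneg_ne (P : ℝ[X]) (r : ℝ) (h : ∀ t : ℝ, t ≠ r → 0 ≤ P.eval t) :
    ∀ t : ℝ, 0 ≤ P.eval t := by
  intro t
  rcases eq_or_ne t r with rfl | hne
  · by_contra hlt
    push_neg at hlt
    have hev : ∀ᶠ x in nhds t, P.eval x < 0 :=
      (P.continuous.continuousAt).eventually_lt continuousAt_const hlt
    obtain ⟨δ, hδ, hball⟩ := Metric.eventually_nhds_iff.mp hev
    have hx : P.eval (t + δ/2) < 0 := hball (by
      simp only [Real.dist_eq, add_sub_cancel_left]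
      rw [abs_of_pos (by linarith)]; linarith)
    have : (0:ℝ) ≤ P.eval (t + δ/2) := h _ (by intro hh; nlinarith [hh]) 
    linarith
  · exact h t hne

lemma nonneg_sum_two_sq (N : ℝ[X]) (h : ∀ t : ℝ, 0 ≤ N.eval t) :
    ∃ u v : ℝ[X], N = u ^ 2 + v ^ 2 := by
  generalize hn : N.natDegree = n
  induction n using Nat.strong_induction_on generalizing N with
  | _ n ih =>
  rcases Nat.eq_zero_or_pos n with h0 | hpos
  · subst h0
    have hC : N = C (N.coeff 0) := eq_C_of_natDegree_eq_zero hn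
    have hc : 0 ≤ N.coeff 0 := by have := h 0; rwa [hC, eval_C] at this
    exact ⟨C (Real.sqrt (N.coeff 0)), 0, by
      rw [← C_pow, Real.sq_sqrt hc, ← hC]; ring⟩
  · have hN0 : N ≠ 0 := by
      intro hz; rw [hz] at hn; simp at hn; omega
    have hdegpos : 0 < (N.map (algebraMap ℝ ℂ)).degree := by
      rw [degree_map]
      exact natDegree_pos_iff_degree_pos.mp (by omega)
    obtain ⟨z, hz⟩ := Complex.exists_root hdegpos
    rcases eq_or_ne z.im 0 with him | him
    · -- real root r = z.re
      have hroot : N.eval z.re = 0 := by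
        have hzr : z = (z.re : ℂ) := by apply Complex.ext <;> simp [him]
        have h2 : (N.map (algebraMap ℝ ℂ)).eval ((z.re : ℝ) : ℂ) = 0 := by rw [← hzr]; exact hz
        rw [eval_map_real] at h2
        exact_mod_cast h2
      have hmin : IsLocalMin (fun x => N.eval x) z.re :=
        Filter.Eventually.of_forall (fun x => by simpa [hroot] using h x)
      have hder : N.derivative.eval z.re = 0 := by
        rw [← Polynomial.deriv]; exact hmin.deriv_eq_zero
      obtain ⟨Q, hQ⟩ := (dvd_iff_isRoot).mpr hroot
      have hQr : Q.eval z.re = 0 := by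
        have hd : N.derivative = Q + (X - C z.re) * Q.derivative := by
          rw [hQ, derivative_mul, derivative_sub, derivative_X, derivative_C]; ring
        have h2 := hder
        rw [hd] at h2; simpa using h2
      obtain ⟨N₁, hN₁⟩ := (dvd_iff_isRoot).mpr hQr
      have hfac : N = (X - C z.re)^2 * N₁ := by rw [hQ, hN₁]; ring
      have hNe : ∀ t : ℝ, N.eval t = (t - z.re)^2 * N₁.eval t := by
        intro t; rw [hfac]; simp
      have hN₁nonneg : ∀ t : ℝ, 0 ≤ N₁.eval t :=
        nonneg_eval_of_nonneg_ne N₁ z.re (fun t ht =>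
          nonneg_of_sq_mul (h t) (hNe t) (sub_ne_zero.mpr ht))
      have hN₁ne : N₁ ≠ 0 := fun hzz => hN0 (by rw [hfac, hzz, mul_zero])
      have hdeg : N₁.natDegree = n - 2 := by
        have h2 : ((X - C z.re)^2 : ℝ[X]).natDegree = 2 := by
          rw [natDegree_pow, natDegree_X_sub_C]
        have h3 := natDegree_mul (pow_ne_zero 2 (X_sub_C_ne_zero z.re)) hN₁ne
        rw [← hfac, hn, h2] at h3
        omega
      obtain ⟨u, v, huv⟩ := ih (n-2) (by omega) N₁ hN₁nonneg hdeg
      exact ⟨(X - C z.re) * u, (X - C z.re) * v, by rw [hfac, huv]; ring⟩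
    · -- complex conjugate pair: quadratic factor
      set D : ℝ[X] := X^2 + (C (-(2*z.re)) * X + C (z.re^2 + z.im^2)) with hD
      have hDsq : D = (X - C z.re)^2 + C z.im ^ 2 := by
        rw [hD]
        simp only [C_neg, C_mul, C_add, C_pow, map_ofNat]; ring
      have hDmonic : D.Monic := monic_X_pow_add (by
        apply lt_of_le_of_lt (degree_linear_le)
        norm_num)
      have hDdvd : D ∣ N := by
        have hmod := modByMonic_add_div N D
        -- evaluate map at z
        have hDz : (D.map (algebraMap ℝ ℂ)).eval z = 0 := by
          rw [hD]
          simp only [Polynomial.map_add, Polynomial.map_mul, Polynomial.map_pow, map_X, map_C]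
          simp only [eval_add, eval_mul, eval_pow, eval_X, eval_C, Complex.coe_algebraMap]
          have hz2 : z^2 = (2*z.re) * z - (z.re^2 + z.im^2) := by
            have := Complex.sq_norm z
            apply Complex.ext <;>
              simp [Complex.ext_iff, pow_two, Complex.mul_re, Complex.mul_im] <;> ring
          rw [hz2]
          push_cast
          ring
        have hrz : ((N %ₘ D).map (algebraMap ℝ ℂ)).eval z = 0 := by
          have hmap := congrArg (Polynomial.map (algebraMap ℝ ℂ)) hmod
          rw [Polynomial.map_add, Polynomial.map_mul] at hmap
          have h4 := hz
          rw [Polynomial.IsRoot, ← hmap] at h4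
          simpa [hDz] using h4
        have htail : degree (C (-(2*z.re)) * X + C (z.re^2+z.im^2)) < degree ((X:ℝ[X])^2) := by
          rw [degree_X_pow]
          exact lt_of_le_of_lt (degree_linear_le) (by norm_num)
        have hDdeg : D.degree = 2 := by
          rw [hD, degree_add_eq_left_of_degree_lt htail, degree_X_pow]
          rfl
        have hdeg : (N %ₘ D).degree ≤ 1 := by
          have := degree_modByMonic_lt N hDmonic
          rw [hDdeg] at this
          exact Order.le_of_lt_succ (by exact_mod_cast this)
        set rr := N %ₘ D with hrr
        have hform : rr = C (rr.coeff 1) * X + C (rr.coeff 0) := eq_X_add_C_of_degree_le_one hdeg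
        have : (rr.coeff 1 : ℂ) * z + (rr.coeff 0 : ℂ) = 0 := by
          rw [hform] at hrz
          simpa using hrz
        have him1 : rr.coeff 1 * z.im = 0 := by
          have := congrArg Complex.im this
          simpa using this
        have hc1 : rr.coeff 1 = 0 := by
          rcases mul_eq_zero.mp him1 with h'|h'
          · exact h'
          · exact absurd h' him
        have hre0 : rr.coeff 0 = 0 := by
          have := congrArg Complex.re this
          simp [hc1] at this
          exact this
        have hrr0 : rr = 0 := by rw [hform, hc1, hre0]; simp
        exact (modByMonic_eq_zero_iff_dvd hDmonic).mp hrr0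
      obtain ⟨N₁, hN₁⟩ := hDdvd
      have hDpos : ∀ t : ℝ, 0 < D.eval t := by
        intro t
        rw [hDsq]
        simp only [eval_add, eval_pow, eval_sub, eval_X, eval_C]
        have : z.im^2 > 0 := by positivity
        nlinarith
      have hN₁nonneg : ∀ t : ℝ, 0 ≤ N₁.eval t := by
        intro t
        have h1 : N.eval t = D.eval t * N₁.eval t := by rw [hN₁]; simp
        have h2 := h t
        nlinarith [hDpos t]
      have hN₁ne : N₁ ≠ 0 := fun hzz => hN0 (by rw [hN₁, hzz, mul_zero])
      have hDne : D ≠ 0 := hDmonic.ne_zero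
      have hdeg : N₁.natDegree = n - 2 := by
        have h3 := natDegree_mul hDne hN₁ne
        have htail : degree (C (-(2*z.re)) * X + C (z.re^2+z.im^2)) < degree ((X:ℝ[X])^2) := by
          rw [degree_X_pow]
          exact lt_of_le_of_lt (degree_linear_le) (by norm_num)
        have hDdeg2 : D.degree = 2 := by
          rw [hD, degree_add_eq_left_of_degree_lt htail, degree_X_pow]
          rfl
        have hDdeg : D.natDegree = 2 := natDegree_eq_of_degree_eq_some hDdeg2
        rw [← hN₁, hn, hDdeg] at h3
        omega
      obtain ⟨u, v, huv⟩ := ih (n-2) (by omega) N₁ hN₁nonneg hdeg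
      refine ⟨(X - C z.re)*u - C z.im * v, (X - C z.re)*v + C z.im * u, ?_⟩
      rw [hN₁, hDsq, huv]; ring

lemma comp_X_sq_eq_sum (E : ℝ[X]) :
    E.comp (X^2) = ∑ i ∈ E.support, C (E.coeff i) * X^(2*i) := by
  conv_lhs => rw [comp, eval₂_eq_sum, Polynomial.sum]
  exact Finset.sum_congr rfl (fun i _ => by rw [← pow_mul])

lemma coeff_comp_X_sq (E : ℝ[X]) (n : ℕ) :
    (E.comp (X^2)).coeff n = if 2 ∣ n then E.coeff (n/2) else 0 := by
  rw [comp_X_sq_eq_sum, finset_sum_coeff]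
  simp only [coeff_C_mul, coeff_X_pow]
  by_cases h : 2 ∣ n
  · obtain ⟨m, rfl⟩ := h
    rw [if_pos ⟨m, rfl⟩]
    have hm : (2*m)/2 = m := by omega
    rw [hm]
    rcases eq_or_ne (E.coeff m) 0 with h0 | h0
    · rw [h0]
      apply Finset.sum_eq_zero
      intro i _
      by_cases hi : 2*m = 2*i
      · have : m = i := by omega
        rw [← this, h0]; simp
      · rw [if_neg hi]; simp
    · rw [Finset.sum_eq_single m]
      · simp
      · intro i _ hne
        rw [if_neg (by omega : ¬ 2*m = 2*i)]; simp
      · intro hm'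
        exact absurd (mem_support_iff.mpr h0) hm'
  · rw [if_neg h]
    apply Finset.sum_eq_zero
    intro i _
    rw [if_neg (by omega : ¬ n = 2*i)]; simp

/-- decomposition into even and odd parts -/
lemma coeff_range_sum (n : ℕ) (a : ℕ → ℝ) (j : ℕ) :
    (∑ i ∈ Finset.range n, C (a i) * X^i).coeff j = if j < n then a j else 0 := by
  rw [finset_sum_coeff]
  simp only [coeff_C_mul, coeff_X_pow]
  by_cases h : j < n
  · rw [if_pos h, Finset.sum_eq_single j]
    · simp
    · intro i _ hne; rw [if_neg (Ne.symm hne)]; simp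
    · intro hj; exact absurd (Finset.mem_range.mpr h) hj
  · rw [if_neg h]
    apply Finset.sum_eq_zero
    intro i hi
    rw [if_neg (by rw [Finset.mem_range] at hi; omega : ¬ j = i)]; simp

lemma exists_even_odd (u : ℝ[X]) :
    ∃ E O : ℝ[X], u = E.comp (X^2) + X * O.comp (X^2) ∧
      (∀ i, E.coeff i = u.coeff (2*i)) ∧ (∀ i, O.coeff i = u.coeff (2*i+1)) := by
  set n := u.natDegree with hn
  set E := ∑ i ∈ Finset.range (n+1), C (u.coeff (2*i)) * X^i with hE
  set O := ∑ i ∈ Finset.range (n+1), C (u.coeff (2*i+1)) * X^i with hO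
  have hEc : ∀ i, E.coeff i = u.coeff (2*i) := by
    intro i
    rw [hE, coeff_range_sum]
    by_cases h : i < n+1
    · rw [if_pos h]
    · rw [if_neg h]
      exact (coeff_eq_zero_of_natDegree_lt (by omega)).symm
  have hOc : ∀ i, O.coeff i = u.coeff (2*i+1) := by
    intro i
    rw [hO, coeff_range_sum]
    by_cases h : i < n+1
    · rw [if_pos h]
    · rw [if_neg h]
      exact (coeff_eq_zero_of_natDegree_lt (by omega)).symm
  refine ⟨E, O, ?_, hEc, hOc⟩
  ext j
  rw [coeff_add, coeff_comp_X_sq]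
  rcases Nat.even_or_odd j with ⟨m, hm⟩ | ⟨m, hm⟩
  · subst hm
    rw [if_pos ⟨m, by ring⟩]
    have hm2 : (m + m) / 2 = m := by omega
    rw [hm2, hEc m]
    have hX : (X * O.comp (X^2)).coeff (m + m) = 0 := by
      rcases Nat.eq_zero_or_pos m with rfl | hm0
      · simp
      · have : m + m = (m + m - 1) + 1 := by omega
        rw [this, coeff_X_mul, coeff_comp_X_sq, if_neg (by omega)]
    rw [hX]
    have : 2 * m = m + m := by ring
    rw [this, add_zero]
  · subst hm
    rw [if_neg (by omega)]
    have : 2 * m + 1 = (2 * m) + 1 := by ring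
    rw [this, coeff_X_mul, coeff_comp_X_sq, if_pos ⟨m, rfl⟩]
    have hm2 : (2*m) / 2 = m := by omega
    rw [hm2, hOc m, zero_add]

lemma eq_zero_of_eval_Ici {P : ℝ[X]} (h : ∀ s : ℝ, 0 ≤ s → P.eval s = 0) : P = 0 := by
  apply eq_zero_of_infinite_isRoot
  apply Set.Infinite.mono (s := Set.Ici (0:ℝ))
  · intro s hs; exact h s hs
  · exact Set.Ici_infinite 0

lemma two_mul_natDegree_le_of_sq_add_sq_aux {N u v : ℝ[X]} (h : N = u^2 + v^2)
    (hvu : v.natDegree ≤ u.natDegree) : 2 * u.natDegree ≤ N.natDegree := by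
  rcases eq_or_ne u 0 with rfl | hu
  · simp
  set d := u.natDegree with hd
  have hc : N.coeff (2*d) = u.leadingCoeff^2 + (v^2).coeff (2*d) := by
    rw [h, coeff_add, sq u, sq u.leadingCoeff]
    congr 1
    have := coeff_mul_degree_add_degree u u
    rw [← hd] at this
    rw [show 2*d = d + d by ring, this]
  have hvnn : 0 ≤ (v^2).coeff (2*d) := by
    rcases lt_or_eq_of_le hvu with hlt | heq
    · rw [coeff_eq_zero_of_natDegree_lt]
      have h1 : (v^2).natDegree ≤ 2 * v.natDegree := by
        rw [sq]; exact le_trans (natDegree_mul_le) (by omega)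
      omega
    · rw [sq, show 2*d = v.natDegree + v.natDegree by omega, coeff_mul_degree_add_degree]
      exact mul_self_nonneg _
  have hne : N.coeff (2*d) ≠ 0 := by
    have hlc : u.leadingCoeff ≠ 0 := leadingCoeff_ne_zero.mpr hu
    have : 0 < u.leadingCoeff^2 := by positivity
    rw [hc]; nlinarith
  exact le_natDegree_of_ne_zero hne

lemma two_mul_natDegree_le_of_sq_add_sq {N u v : ℝ[X]} (h : N = u^2 + v^2) :
    2 * u.natDegree ≤ N.natDegree ∧ 2 * v.natDegree ≤ N.natDegree := by
  rcases le_total v.natDegree u.natDegree with hvu | huv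
  · have h1 := two_mul_natDegree_le_of_sq_add_sq_aux h hvu
    exact ⟨h1, by omega⟩
  · have h1 := two_mul_natDegree_le_of_sq_add_sq_aux (h.trans (add_comm _ _)) huv
    exact ⟨by omega, h1⟩

noncomputable def binomSum (m : ℕ) (E : ℝ[X]) : ℝ[X] :=
  ∑ j ∈ Finset.range (m+1), C (E.coeff j) * (((1:ℝ[X]) - X)^j * ((1:ℝ[X]) + X)^(m-j))

lemma natDegree_one_sub_X : ((1:ℝ[X]) - X).natDegree = 1 := by
  have h : (1:ℝ[X]) - X = -(X - C 1) := by rw [C_1]; ring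
  rw [h, natDegree_neg, natDegree_X_sub_C]

lemma natDegree_one_add_X : ((1:ℝ[X]) + X).natDegree = 1 := by
  have h : (1:ℝ[X]) + X = X + C 1 := by rw [C_1]; ring
  rw [h, natDegree_X_add_C]

lemma binomSum_natDegree_le (m : ℕ) (E : ℝ[X]) : (binomSum m E).natDegree ≤ m := by
  apply natDegree_sum_le_of_forall_le
  intro j hj
  rw [Finset.mem_range] at hj
  calc (C (E.coeff j) * (((1:ℝ[X]) - X)^j * ((1:ℝ[X]) + X)^(m-j))).natDegree
      ≤ (C (E.coeff j)).natDegree + (((1:ℝ[X]) - X)^j * ((1:ℝ[X]) + X)^(m-j)).natDegree :=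
        natDegree_mul_le
    _ ≤ 0 + ((((1:ℝ[X]) - X)^j).natDegree + (((1:ℝ[X]) + X)^(m-j)).natDegree) := by
        gcongr
        · exact le_of_eq (natDegree_C _)
        · exact natDegree_mul_le
    _ ≤ j * 1 + (m-j) * 1 := by
        rw [zero_add]
        gcongr
        · exact le_trans natDegree_pow_le (by rw [natDegree_one_sub_X])
        · exact le_trans natDegree_pow_le (by rw [natDegree_one_add_X])
    _ ≤ m := by omega

lemma binomSum_eval (m : ℕ) (E : ℝ[X]) (hdeg : E.natDegree ≤ m) (x : ℝ) (hx : 1 + x ≠ 0) :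
    (binomSum m E).eval x = (1+x)^m * E.eval ((1-x)/(1+x)) := by
  rw [binomSum, eval_finset_sum, eval_eq_sum_range' (lt_of_le_of_lt hdeg (Nat.lt_succ_self m)),
    Finset.mul_sum]
  apply Finset.sum_congr rfl
  intro j hj
  rw [Finset.mem_range] at hj
  simp only [eval_mul, eval_C, eval_pow, eval_add, eval_sub, eval_one, eval_X]
  rw [div_pow]
  have hp : (1+x)^m = (1+x)^(m-j) * (1+x)^j := by rw [← pow_add]; congr 1; omega
  rw [hp]
  field_simp

lemma lukacs_unit (k : ℕ) (hk : 1 ≤ k) (q : ℝ[X]) (hdeg : q.natDegree ≤ 2*k)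
    (hq : ∀ x ∈ Set.Icc (-1:ℝ) 1, 0 ≤ q.eval x) :
    ∃ f₁ f₂ g₁ g₂ : ℝ[X], f₁.natDegree ≤ k ∧ f₂.natDegree ≤ k ∧
      g₁.natDegree ≤ k-1 ∧ g₂.natDegree ≤ k-1 ∧
      q = f₁^2 + f₂^2 + (1 - X^2) * (g₁^2 + g₂^2) := by
  obtain ⟨m, rfl⟩ : ∃ m, k = m + 1 := ⟨k-1, by omega⟩
  set R := binomSum (2*(m+1)) q with hR
  have hRdeg : R.natDegree ≤ 2*(m+1) := binomSum_natDegree_le _ _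
  have hReval : ∀ s : ℝ, 1 + s ≠ 0 →
      R.eval s = (1+s)^(2*(m+1)) * q.eval ((1-s)/(1+s)) :=
    fun s hs => binomSum_eval _ q hdeg s hs
  set N := R.comp (X^2) with hN
  have hNeval : ∀ t : ℝ, N.eval t = R.eval (t^2) := by
    intro t; rw [hN, eval_comp]; simp
  have hNnonneg : ∀ t : ℝ, 0 ≤ N.eval t := by
    intro t
    have h1 : (0:ℝ) < 1 + t^2 := by positivity
    rw [hNeval, hReval _ (ne_of_gt h1)]
    have harg : (1 - t^2)/(1 + t^2) ∈ Set.Icc (-1:ℝ) 1 := by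
      constructor
      · rw [le_div_iff₀ h1]; nlinarith
      · rw [div_le_one h1]; nlinarith
    have := hq _ harg
    positivity
  obtain ⟨u, v, huv⟩ := nonneg_sum_two_sq N hNnonneg
  have hNdeg : N.natDegree ≤ 4*(m+1) := by
    rw [hN, natDegree_comp, natDegree_X_pow]
    omega
  obtain ⟨hud, hvd⟩ := two_mul_natDegree_le_of_sq_add_sq huv
  obtain ⟨E₁, O₁, hu1, hE₁c, hO₁c⟩ := exists_even_odd u
  obtain ⟨E₂, O₂, hu2, hE₂c, hO₂c⟩ := exists_even_odd v
  -- degree bounds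
  have hcoeffdeg : ∀ (E w : ℝ[X]), (∀ i, E.coeff i = w.coeff (2*i)) →
      w.natDegree ≤ 2*(m+1) → E.natDegree ≤ m+1 := by
    intro E w hc hw
    rcases eq_or_ne E 0 with rfl | hEne
    · simp
    · have h1 : w.coeff (2*E.natDegree) ≠ 0 := by
        rw [← hc]; exact leadingCoeff_ne_zero.mpr hEne
      have := le_natDegree_of_ne_zero h1
      omega
  have hcoeffdegO : ∀ (O w : ℝ[X]), (∀ i, O.coeff i = w.coeff (2*i+1)) →
      w.natDegree ≤ 2*(m+1) → O.natDegree ≤ m := by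
    intro O w hc hw
    rcases eq_or_ne O 0 with rfl | hOne
    · simp
    · have h1 : w.coeff (2*O.natDegree+1) ≠ 0 := by
        rw [← hc]; exact leadingCoeff_ne_zero.mpr hOne
      have := le_natDegree_of_ne_zero h1
      omega
  have hud' : u.natDegree ≤ 2*(m+1) := by omega
  have hvd' : v.natDegree ≤ 2*(m+1) := by omega
  have hE₁d : E₁.natDegree ≤ m+1 := hcoeffdeg E₁ u hE₁c hud'
  have hE₂d : E₂.natDegree ≤ m+1 := hcoeffdeg E₂ v hE₂c hvd'
  have hO₁d : O₁.natDegree ≤ m := hcoeffdegO O₁ u hO₁c hud'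
  have hO₂d : O₂.natDegree ≤ m := hcoeffdegO O₂ v hO₂c hvd'
  set A := E₁^2 + E₂^2 + X*(O₁^2 + O₂^2) with hA
  -- R = A
  have hkey : ∀ t : ℝ, R.eval (t^2) = A.eval (t^2) + t * ((2:ℝ[X])*(E₁*O₁+E₂*O₂)).eval (t^2) := by
    intro t
    have h1 : N.eval t = (u.eval t)^2 + (v.eval t)^2 := by rw [huv]; simp
    have h2 : u.eval t = E₁.eval (t^2) + t * O₁.eval (t^2) := by
      conv_lhs => rw [hu1]
      simp [eval_comp]
    have h3 : v.eval t = E₂.eval (t^2) + t * O₂.eval (t^2) := by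
      conv_lhs => rw [hu2]
      simp [eval_comp]
    rw [← hNeval, h1, h2, h3, hA]
    simp only [eval_add, eval_mul, eval_pow, eval_X, eval_ofNat]
    ring
  have hRA : R = A := by
    have hz : ∀ s : ℝ, 0 ≤ s → (R - A).eval s = 0 := by
      intro s hs
      have ht : (Real.sqrt s)^2 = s := Real.sq_sqrt hs
      have h1 := hkey (Real.sqrt s)
      have h2 := hkey (-(Real.sqrt s))
      rw [neg_sq] at h2
      rw [eval_sub, ht] at *
      rw [ht] at h1 h2
      linarith
    have := eq_zero_of_eval_Ici hz
    exact sub_eq_zero.mp this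
  -- construct the representation
  set F₁ := binomSum (m+1) E₁ with hF₁
  set F₂ := binomSum (m+1) E₂ with hF₂
  set G₁ := binomSum m O₁ with hG₁
  set G₂ := binomSum m O₂ with hG₂
  have hmain : C ((2:ℝ)^(2*(m+1))) * q = F₁^2 + F₂^2 + (1 - X^2) * (G₁^2 + G₂^2) := by
    have hev : ∀ x : ℝ, x ∈ Set.Ioo (-1:ℝ) 1 →
        (C ((2:ℝ)^(2*(m+1))) * q - (F₁^2 + F₂^2 + (1 - X^2) * (G₁^2 + G₂^2))).eval x = 0 := by
      intro x hx
      obtain ⟨hx1, hx2⟩ := hx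
      have hx0 : (0:ℝ) < 1 + x := by linarith
      have hxne : (1:ℝ) + x ≠ 0 := ne_of_gt hx0
      set s := (1-x)/(1+x) with hs
      have hs1 : (1+s) * (1+x) = 2 := by
        rw [hs]; field_simp; ring
      have hsne : (1:ℝ) + s ≠ 0 := by
        intro h0; rw [h0, zero_mul] at hs1; norm_num at hs1
      have hsx : (1-s)/(1+s) = x := by
        rw [hs]
        rw [div_eq_iff (by rw [← hs]; exact hsne : (1:ℝ) + (1-x)/(1+x) ≠ 0)]
        field_simp
        ring
      have hRs : R.eval s = (1+s)^(2*(m+1)) * q.eval x := by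
        rw [hReval s hsne, hsx]
      have hAs : R.eval s = (E₁.eval s)^2 + (E₂.eval s)^2 + s*((O₁.eval s)^2 + (O₂.eval s)^2) := by
        rw [hRA, hA]; simp [eval_add, eval_mul, eval_pow]
      have hF1x : F₁.eval x = (1+x)^(m+1) * E₁.eval s := binomSum_eval _ _ hE₁d x hxne
      have hF2x : F₂.eval x = (1+x)^(m+1) * E₂.eval s := binomSum_eval _ _ hE₂d x hxne
      have hG1x : G₁.eval x = (1+x)^m * O₁.eval s := binomSum_eval _ _ hO₁d x hxne
      have hG2x : G₂.eval x = (1+x)^m * O₂.eval s := binomSum_eval _ _ hO₂d x hxne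
      have hsval : s * (1+x)^2 = 1 - x^2 := by
        rw [hs]; field_simp; ring
      have hpow : ((1+s) * (1+x))^(2*(m+1)) = 2^(2*(m+1)) := by rw [hs1]
      rw [mul_pow] at hpow
      simp only [eval_sub, eval_mul, eval_add, eval_pow, eval_one, eval_X, eval_C]
      rw [hF1x, hF2x, hG1x, hG2x]
      have hq2 : 2^(2*(m+1)) * q.eval x = (1+x)^(2*(m+1)) * R.eval s := by
        rw [hRs, ← hpow]; ring
      linear_combination hq2 + (1+x)^(2*(m+1)) * hAs
        + (1+x)^(2*m)*((O₁.eval s)^2+(O₂.eval s)^2) * hsval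
    have hinf : (C ((2:ℝ)^(2*(m+1))) * q - (F₁^2 + F₂^2 + (1 - X^2) * (G₁^2 + G₂^2))) = 0 := by
      apply eq_zero_of_infinite_isRoot
      apply Set.Infinite.mono (s := Set.Ioo (-1:ℝ) 1)
      · intro x hx; exact hev x hx
      · exact Set.Ioo_infinite (by norm_num)
    have := sub_eq_zero.mp hinf
    exact this
  -- divide by the constant
  set c : ℝ := ((2:ℝ)^(m+1))⁻¹ with hc
  have hc2 : c^2 * (2:ℝ)^(2*(m+1)) = 1 := by
    have h2 : ((2:ℝ)^(m+1))^2 = 2^(2*(m+1)) := by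
      rw [← pow_mul]; congr 1; ring
    rw [hc, ← h2]
    have hne : ((2:ℝ)^(m+1)) ≠ 0 := by positivity
    field_simp
  refine ⟨C c * F₁, C c * F₂, C c * G₁, C c * G₂, ?_, ?_, ?_, ?_, ?_⟩
  · exact le_trans natDegree_mul_le (by simpa [natDegree_C] using binomSum_natDegree_le (m+1) E₁)
  · exact le_trans natDegree_mul_le (by simpa [natDegree_C] using binomSum_natDegree_le (m+1) E₂)
  · exact le_trans natDegree_mul_le (by simpa [natDegree_C] using binomSum_natDegree_le m O₁)
  · exact le_trans natDegree_mul_le (by simpa [natDegree_C] using binomSum_natDegree_le m O₂)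
  · have h1 : (C (c^2) * C ((2:ℝ)^(2*(m+1)))) * q = q := by
      rw [← C_mul, hc2, C_1, one_mul]
    calc q = C (c^2) * (C ((2:ℝ)^(2*(m+1))) * q) := by rw [← mul_assoc, h1]
    _ = C (c^2) * (F₁^2 + F₂^2 + (1 - X^2) * (G₁^2 + G₂^2)) := by rw [hmain]
    _ = (C c * F₁)^2 + (C c * F₂)^2 + (1 - X^2) * ((C c * G₁)^2 + (C c * G₂)^2) := by
        rw [C_pow]
        ring

lemma lukacs_scaled (k : ℕ) (hk : 1 ≤ k) (ε : ℝ) (hε : 0 < ε) (q : ℝ[X])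
    (hdeg : q.natDegree ≤ 2*k) (hq : ∀ x ∈ Set.Icc (-ε) ε, 0 ≤ q.eval x) :
    ∃ f₁ f₂ g₁ g₂ : ℝ[X], f₁.natDegree ≤ k ∧ f₂.natDegree ≤ k ∧
      g₁.natDegree ≤ k-1 ∧ g₂.natDegree ≤ k-1 ∧
      q = f₁^2 + f₂^2 + (C (ε^2) - X^2) * (g₁^2 + g₂^2) := by
  have hεne : ε ≠ 0 := ne_of_gt hε
  set q1 := q.comp (C ε * X) with hq1
  have hdegscale : (C ε * X : ℝ[X]).natDegree = 1 := by
    rw [natDegree_C_mul_X _ hεne]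
  have hq1deg : q1.natDegree ≤ 2*k := by
    rw [hq1, natDegree_comp, hdegscale, mul_one]; exact hdeg
  have hq1eval : ∀ x : ℝ, q1.eval x = q.eval (ε * x) := by
    intro x; rw [hq1, eval_comp]; simp
  have hq1nonneg : ∀ x ∈ Set.Icc (-1:ℝ) 1, 0 ≤ q1.eval x := by
    intro x hx
    obtain ⟨h1, h2⟩ := hx
    rw [hq1eval]
    apply hq
    constructor
    · nlinarith
    · nlinarith
  obtain ⟨f₁, f₂, g₁, g₂, hf₁, hf₂, hg₁, hg₂, hrep⟩ := lukacs_unit k hk q1 hq1deg hq1nonneg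
  set w : ℝ[X] := C ε⁻¹ * X with hw
  have hwdeg : w.natDegree = 1 := by
    rw [hw, natDegree_C_mul_X _ (inv_ne_zero hεne)]
  have hqcompw : q1.comp w = q := by
    rw [hq1, comp_assoc]
    have : (C ε * X).comp w = X := by
      rw [mul_comp, C_comp, X_comp, hw, ← mul_assoc, ← C_mul,
        mul_inv_cancel₀ hεne, C_1, one_mul]
    rw [this, comp_X]
  have hcomp : q = (f₁.comp w)^2 + (f₂.comp w)^2 +
      ((1:ℝ[X]) - w^2) * ((g₁.comp w)^2 + (g₂.comp w)^2) := by
    conv_lhs => rw [← hqcompw]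
    rw [hrep]
    simp only [add_comp, mul_comp, pow_comp, sub_comp, one_comp, X_comp]
  have hconst : (C ε⁻¹)^2 * C (ε^2) = (1:ℝ[X]) := by
    rw [← C_pow, ← C_mul]
    have : ε⁻¹^2 * ε^2 = 1 := by field_simp
    rw [this, C_1]
  have hw2 : (1:ℝ[X]) - w^2 = (C ε⁻¹)^2 * (C (ε^2) - X^2) := by
    rw [hw]
    linear_combination (-1 : ℝ[X]) * hconst
  refine ⟨f₁.comp w, f₂.comp w, C ε⁻¹ * (g₁.comp w), C ε⁻¹ * (g₂.comp w), ?_, ?_, ?_, ?_, ?_⟩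
  · rw [natDegree_comp, hwdeg, mul_one]; exact hf₁
  · rw [natDegree_comp, hwdeg, mul_one]; exact hf₂
  · refine le_trans natDegree_mul_le ?_
    rw [natDegree_C, natDegree_comp, hwdeg, mul_one, zero_add]; exact hg₁
  · refine le_trans natDegree_mul_le ?_
    rw [natDegree_C, natDegree_comp, hwdeg, mul_one, zero_add]; exact hg₂
  · rw [hcomp, hw2]; ring

noncomputable def momL (n : ℕ) (m : ℕ → ℝ) : ℝ[X] →ₗ[ℝ] ℝ :=
  ∑ j ∈ Finset.range (n+1), m j • (Polynomial.lcoeff ℝ j)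

lemma momL_apply (n : ℕ) (m : ℕ → ℝ) (f : ℝ[X]) :
    momL n m f = ∑ j ∈ Finset.range (n+1), m j * f.coeff j := by
  rw [momL, LinearMap.sum_apply]
  apply Finset.sum_congr rfl
  intro j _
  rw [LinearMap.smul_apply, lcoeff_apply, smul_eq_mul]

lemma momL_monomial (n : ℕ) (m : ℕ → ℝ) (a : ℝ) (i : ℕ) (hi : i ≤ n) :
    momL n m (monomial i a) = m i * a := by
  rw [momL_apply]
  rw [Finset.sum_eq_single i]
  · rw [coeff_monomial, if_pos rfl]
  · intro j _ hne; rw [coeff_monomial, if_neg (Ne.symm hne), mul_zero]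
  · intro h; exact absurd (Finset.mem_range.mpr (by omega)) h

lemma momL_sq (K n : ℕ) (m : ℕ → ℝ) (f : ℝ[X]) (hf : f.natDegree ≤ K) (hn : 2*K ≤ n) :
    momL n m (f^2) = ∑ i ∈ Finset.range (K+1), ∑ j ∈ Finset.range (K+1),
      f.coeff i * f.coeff j * m (i+j) := by
  conv_lhs => rw [as_sum_range' f (K+1) (by omega)]
  rw [sq, Finset.sum_mul_sum]
  rw [map_sum]
  apply Finset.sum_congr rfl
  intro i hi
  rw [map_sum]
  apply Finset.sum_congr rfl
  intro j hj
  rw [Finset.mem_range] at hi hj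
  rw [monomial_mul_monomial, momL_monomial _ _ _ _ (by omega)]
  ring

lemma momL_loc (K n : ℕ) (m : ℕ → ℝ) (c : ℝ) (g : ℝ[X]) (hg : g.natDegree ≤ K)
    (hn : 2*K+2 ≤ n) :
    momL n m ((C c - X^2) * g^2) = ∑ i ∈ Finset.range (K+1), ∑ j ∈ Finset.range (K+1),
      g.coeff i * g.coeff j * (c * m (i+j) - m (i+j+2)) := by
  conv_lhs => rw [as_sum_range' g (K+1) (by omega)]
  rw [pow_two (∑ i ∈ Finset.range (K+1), (monomial i) (g.coeff i)),
    Finset.sum_mul_sum, Finset.mul_sum, map_sum]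
  apply Finset.sum_congr rfl
  intro i hi
  rw [Finset.mul_sum, map_sum]
  apply Finset.sum_congr rfl
  intro j hj
  rw [Finset.mem_range] at hi hj
  rw [monomial_mul_monomial, sub_mul, C_mul_monomial,
    X_pow_eq_monomial, monomial_mul_monomial, map_sub,
    momL_monomial _ _ _ _ (by omega), momL_monomial _ _ _ _ (by omega)]
  have h2 : 2 + (i + j) = i + j + 2 := by omega
  rw [h2]
  ring

lemma momL_sq_nonneg (K n : ℕ) (m : ℕ → ℝ) (H : (hankel m 0 K).PosSemidef)
    (f : ℝ[X]) (hf : f.natDegree ≤ K) (hn : 2*K ≤ n) :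
    0 ≤ momL n m (f^2) := by
  have h := H.dotProduct_mulVec_nonneg (fun i : Fin (K+1) => f.coeff (i:ℕ))
  rw [momL_sq K n m f hf hn]
  have hform : dotProduct (star (fun i : Fin (K+1) => f.coeff (i:ℕ)))
      ((hankel m 0 K).mulVec (fun i : Fin (K+1) => f.coeff (i:ℕ)))
      = ∑ i ∈ Finset.range (K+1), ∑ j ∈ Finset.range (K+1),
          f.coeff i * f.coeff j * m (i+j) := by
    rw [dotProduct]
    simp only [Pi.star_apply, star_trivial, Matrix.mulVec, dotProduct,
      hankel, Matrix.of_apply]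
    rw [Fin.sum_univ_eq_sum_range (fun i => f.coeff i * ∑ j : Fin (K+1), m (0 + i + j) * f.coeff (j:ℕ))]
    apply Finset.sum_congr rfl
    intro i _
    rw [Finset.mul_sum, Fin.sum_univ_eq_sum_range (fun j => f.coeff i * (m (0 + i + j) * f.coeff j))]
    apply Finset.sum_congr rfl
    intro j _
    have : (0:ℕ) + i + j = i + j := by omega
    rw [this]; ring
  rw [hform] at h
  exact h

lemma momL_loc_nonneg (K n : ℕ) (m : ℕ → ℝ) (c : ℝ)
    (H : (c • hankel m 0 K - hankel m 2 K).PosSemidef)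
    (g : ℝ[X]) (hg : g.natDegree ≤ K) (hn : 2*K+2 ≤ n) :
    0 ≤ momL n m ((C c - X^2) * g^2) := by
  have h := H.dotProduct_mulVec_nonneg (fun i : Fin (K+1) => g.coeff (i:ℕ))
  rw [momL_loc K n m c g hg hn]
  have hform : dotProduct (star (fun i : Fin (K+1) => g.coeff (i:ℕ)))
      ((c • hankel m 0 K - hankel m 2 K).mulVec (fun i : Fin (K+1) => g.coeff (i:ℕ)))
      = ∑ i ∈ Finset.range (K+1), ∑ j ∈ Finset.range (K+1),
          g.coeff i * g.coeff j * (c * m (i+j) - m (i+j+2)) := by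
    rw [dotProduct]
    simp only [Pi.star_apply, star_trivial, Matrix.mulVec, dotProduct,
      hankel, Matrix.of_apply, Matrix.sub_apply, Matrix.smul_apply, smul_eq_mul]
    rw [Fin.sum_univ_eq_sum_range (fun i => g.coeff i *
      ∑ j : Fin (K+1), (c * m (0 + i + j) - m (2 + i + j)) * g.coeff (j:ℕ))]
    apply Finset.sum_congr rfl
    intro i _
    rw [Finset.mul_sum, Fin.sum_univ_eq_sum_range
      (fun j => g.coeff i * ((c * m (0 + i + j) - m (2 + i + j)) * g.coeff j))]
    apply Finset.sum_congr rfl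
    intro j _
    have h1 : (0:ℕ) + i + j = i + j := by omega
    have h2 : (2:ℕ) + i + j = i + j + 2 := by omega
    rw [h1, h2]; ring
  rw [hform] at h
  exact h

lemma hankel_symm_entry (t : ℕ → ℝ) (a K : ℕ) (i j : Fin (K+1)) :
    hankel t a K j i = hankel t a K i j := by
  show t (a + (j:ℕ) + (i:ℕ)) = t (a + (i:ℕ) + (j:ℕ))
  congr 1; omega

lemma hankel_isHermitian (t : ℕ → ℝ) (a K : ℕ) : (hankel t a K).IsHermitian := by
  apply Matrix.ext
  intro i j
  rw [Matrix.conjTranspose_apply, star_trivial]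
  exact hankel_symm_entry t a K i j

lemma hankel_pow_quadform (y : ℝ) (a K : ℕ) (x : Fin (K+1) → ℝ) :
    dotProduct (star x) ((hankel (fun j => y^j) a K).mulVec x)
      = y^a * (∑ i : Fin (K+1), x i * y^(i:ℕ))^2 := by
  rw [dotProduct]
  simp only [Pi.star_apply, star_trivial, Matrix.mulVec, dotProduct,
    hankel, Matrix.of_apply]
  have hrow : ∀ i : Fin (K+1), ∑ j : Fin (K+1), y^(a + (i:ℕ) + (j:ℕ)) * x j
      = y^a * y^(i:ℕ) * ∑ j : Fin (K+1), x j * y^(j:ℕ) := by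
    intro i
    rw [Finset.mul_sum]
    apply Finset.sum_congr rfl
    intro j _
    rw [pow_add, pow_add]
    ring
  calc ∑ i : Fin (K+1), x i * ∑ j : Fin (K+1), y^(a + (i:ℕ) + (j:ℕ)) * x j
      = ∑ i : Fin (K+1), (y^a * (x i * y^(i:ℕ)) * ∑ j : Fin (K+1), x j * y^(j:ℕ)) := by
        apply Finset.sum_congr rfl
        intro i _
        rw [hrow i]; ring
    _ = y^a * (∑ i : Fin (K+1), x i * y^(i:ℕ))^2 := by
        rw [← Finset.sum_mul, ← Finset.mul_sum]
        ring

lemma hankel_pow_psd (y : ℝ) (K : ℕ) : (hankel (fun j => y^j) 0 K).PosSemidef := by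
  rw [Matrix.posSemidef_iff_dotProduct_mulVec]
  constructor
  · exact hankel_isHermitian _ 0 K
  · intro x
    rw [hankel_pow_quadform]
    have : (0:ℝ) ≤ (∑ i : Fin (K+1), x i * y^(i:ℕ))^2 := sq_nonneg _
    simpa using this

lemma hankel_pow_loc_psd (y ε : ℝ) (hy : y^2 ≤ ε^2) (K : ℕ) :
    (ε^2 • hankel (fun j => y^j) 0 K - hankel (fun j => y^j) 2 K).PosSemidef := by
  rw [Matrix.posSemidef_iff_dotProduct_mulVec]
  constructor
  · apply Matrix.ext
    intro i j
    rw [Matrix.conjTranspose_apply, star_trivial]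
    show (ε^2 • hankel _ 0 K - hankel _ 2 K) j i = _
    rw [Matrix.sub_apply, Matrix.sub_apply, Matrix.smul_apply, Matrix.smul_apply,
      hankel_symm_entry (fun j => y^j) 0 K i j, hankel_symm_entry (fun j => y^j) 2 K i j]
  · intro x
    rw [Matrix.sub_mulVec, dotProduct_sub, Matrix.smul_mulVec,
      dotProduct_smul, hankel_pow_quadform, hankel_pow_quadform]
    simp only [pow_zero, one_mul, smul_eq_mul]
    nlinarith [sq_nonneg (∑ i : Fin (K+1), x i * y^(i:ℕ))]

lemma coeff_range_sum' (n : ℕ) (a : ℕ → ℝ) (j : ℕ) :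
    (∑ i ∈ Finset.range n, C (a i) * X^i).coeff j = if j < n then a j else 0 := by
  rw [finset_sum_coeff]
  simp only [coeff_C_mul, coeff_X_pow]
  by_cases h : j < n
  · rw [if_pos h, Finset.sum_eq_single j]
    · simp
    · intro i _ hne; rw [if_neg (Ne.symm hne)]; simp
    · intro hj; exact absurd (Finset.mem_range.mpr h) hj
  · rw [if_neg h]
    apply Finset.sum_eq_zero
    intro i hi
    rw [if_neg (by rw [Finset.mem_range] at hi; omega : ¬ j = i)]; simp

lemma moment_le_bound (k : ℕ) (hk : 1 ≤ k) (ε : ℝ) (hε : 0 < ε) (p : ℕ → ℝ)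
    (m : ℕ → ℝ) (hm0 : m 0 = 1) (H1 : (hankel m 0 k).PosSemidef)
    (H2 : (ε ^ 2 • hankel m 0 (k - 1) - hankel m 2 (k - 1)).PosSemidef)
    (S : ℝ) (hub : ∀ x ∈ Set.Icc (-ε) ε, ∑ j ∈ Finset.range (2*k+1), p j * x ^ j ≤ S) :
    ∑ j ∈ Finset.range (2*k+1), p j * m j ≤ S := by
  set Pp : Polynomial ℝ := ∑ j ∈ Finset.range (2*k+1), C (p j) * X^j with hPp
  have hPpdeg : Pp.natDegree ≤ 2*k := by
    apply natDegree_sum_le_of_forall_le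
    intro j hj
    rw [Finset.mem_range] at hj
    refine le_trans natDegree_mul_le ?_
    rw [natDegree_C, natDegree_X_pow]
    omega
  have hPpeval : ∀ y : ℝ, Pp.eval y = ∑ j ∈ Finset.range (2*k+1), p j * y ^ j := by
    intro y
    rw [hPp, eval_finset_sum]
    apply Finset.sum_congr rfl
    intro j _
    simp
  set q : Polynomial ℝ := C S - Pp with hq
  have hqdeg : q.natDegree ≤ 2*k := by
    refine le_trans (natDegree_sub_le _ _) ?_
    rw [natDegree_C]
    omega
  have hqnonneg : ∀ x ∈ Set.Icc (-ε) ε, 0 ≤ q.eval x := by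
    intro x hx
    rw [hq, eval_sub, eval_C, hPpeval]
    have := hub x hx
    linarith
  obtain ⟨f₁, f₂, g₁, g₂, hf₁, hf₂, hg₁, hg₂, hrep⟩ :=
    lukacs_scaled k hk ε hε q hqdeg hqnonneg
  -- apply the moment functional
  have hLq : momL (2*k) m q = S - ∑ j ∈ Finset.range (2*k+1), p j * m j := by
    rw [hq, map_sub]
    have h1 : momL (2*k) m (C S) = S := by
      rw [← monomial_zero_left, momL_monomial _ _ _ _ (by omega), hm0]
      ring
    have h2 : momL (2*k) m Pp = ∑ j ∈ Finset.range (2*k+1), p j * m j := by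
      rw [momL_apply]
      apply Finset.sum_congr rfl
      intro j hj
      rw [Finset.mem_range] at hj
      rw [hPp, coeff_range_sum' _ _ _, if_pos (by omega)]
      ring
    rw [h1, h2]
  have hLq' : 0 ≤ momL (2*k) m q := by
    rw [hrep]
    have hmul : (C (ε^2) - X^2) * (g₁^2 + g₂^2)
        = (C (ε^2) - X^2) * g₁^2 + (C (ε^2) - X^2) * g₂^2 := by ring
    rw [hmul, map_add, map_add, map_add]
    have hn1 : 0 ≤ momL (2*k) m (f₁^2) :=
      momL_sq_nonneg k (2*k) m H1 f₁ hf₁ (le_refl _)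
    have hn2 : 0 ≤ momL (2*k) m (f₂^2) :=
      momL_sq_nonneg k (2*k) m H1 f₂ hf₂ (le_refl _)
    have hn3 : 0 ≤ momL (2*k) m ((C (ε^2) - X^2) * g₁^2) :=
      momL_loc_nonneg (k-1) (2*k) m (ε^2) H2 g₁ hg₁ (by omega)
    have hn4 : 0 ≤ momL (2*k) m ((C (ε^2) - X^2) * g₂^2) :=
      momL_loc_nonneg (k-1) (2*k) m (ε^2) H2 g₂ hg₂ (by omega)
    linarith
  linarith [hLq', hLq.symm.le]


/-- Exactness of the semidefinite moment relaxation for univariate polynomial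
optimization on a symmetric interval. -/
theorem sdp_moment_relaxation_exact (k : ℕ) (hk : 1 ≤ k) (ε : ℝ) (hε : 0 < ε)
    (p : ℕ → ℝ) :
    sSup {v : ℝ | ∃ y ∈ Set.Icc (-ε) ε,
        v = ∑ j ∈ Finset.range (2 * k + 1), p j * y ^ j} =
      sSup {v : ℝ | ∃ m : ℕ → ℝ, m 0 = 1 ∧ (hankel m 0 k).PosSemidef ∧
        (ε ^ 2 • hankel m 0 (k - 1) - hankel m 2 (k - 1)).PosSemidef ∧
        v = ∑ j ∈ Finset.range (2 * k + 1), p j * m j} := by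
  set P : ℝ → ℝ := fun y => ∑ j ∈ Finset.range (2 * k + 1), p j * y ^ j with hP
  set Sl := {v : ℝ | ∃ y ∈ Set.Icc (-ε) ε, v = P y} with hSl
  set Sr := {v : ℝ | ∃ m : ℕ → ℝ, m 0 = 1 ∧ (hankel m 0 k).PosSemidef ∧
        (ε ^ 2 • hankel m 0 (k - 1) - hankel m 2 (k - 1)).PosSemidef ∧
        v = ∑ j ∈ Finset.range (2 * k + 1), p j * m j} with hSr
  have hPcont : Continuous P := by
    apply continuous_finset_sum
    intro j _
    exact continuous_const.mul (continuous_pow j)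
  have hIccne : (Set.Icc (-ε) ε).Nonempty := ⟨0, by constructor <;> linarith⟩
  obtain ⟨y₀, hy₀mem, hy₀max'⟩ := isCompact_Icc.exists_isMaxOn hIccne hPcont.continuousOn
  have hy₀max : ∀ x ∈ Set.Icc (-ε) ε, P x ≤ P y₀ := fun x hx => hy₀max' hx
  set S := P y₀ with hS
  -- every element of Sr is ≤ S
  have hub : ∀ v ∈ Sr, v ≤ S := by
    rintro v ⟨m, hm0, H1, H2, rfl⟩
    exact moment_le_bound k hk ε hε p m hm0 H1 H2 S (fun x hx => hy₀max x hx)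
  -- Sl ⊆ Sr
  have hsub : Sl ⊆ Sr := by
    rintro v ⟨y, hy, rfl⟩
    refine ⟨fun j => y^j, pow_zero y, hankel_pow_psd y k, ?_, rfl⟩
    have hy2 : y^2 ≤ ε^2 := by
      obtain ⟨h1, h2⟩ := hy
      nlinarith
    exact hankel_pow_loc_psd y ε hy2 (k-1)
  have hSlne : Sl.Nonempty := ⟨S, ⟨y₀, hy₀mem, rfl⟩⟩
  have hSrne : Sr.Nonempty := hSlne.mono hsub
  have hSrbdd : BddAbove Sr := ⟨S, hub⟩
  have hSlbdd : BddAbove Sl := hSrbdd.mono hsub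
  apply le_antisymm
  · exact csSup_le_csSup hSrbdd hSlne hsub
  · calc sSup Sr ≤ S := csSup_le hSrne hub
      _ ≤ sSup Sl := le_csSup hSlbdd ⟨y₀, hy₀mem, rfl⟩
end

section
/- (Schur complement reduction of the three-block step-size matrix.) Let n, m, p be positive natural numbers, let D_τ be a real n×n diagonal matrix with positive diagonal entries, let D_κ be a real m×m diagonal matrix with positive diagonal entries, let γ > 0, and let A be a real m×n matrix and B a real p×n matrix. Define the (n+m+p)×(n+m+p) real symmetric block matrix Q with block rows [D_τ, −Aᵀ, −Bᵀ], [−A, D_κ, 0], [−B, 0, (1/γ)·I_p]. Then Q is positive semidefinite if and only if the n×n matrix D_τ − γ·BᵀB − Aᵀ·D_κ⁻¹·A is positive semidefinite. -/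
open Matrix

lemma posDef_fromBlocks_diag {m p : Type*} [Fintype m] [Fintype p] [DecidableEq m] [DecidableEq p]
    {P : Matrix m m ℝ} {S : Matrix p p ℝ} (hP : P.PosDef) (hS : S.PosDef) :
    (Matrix.fromBlocks P 0 0 S).PosDef := by
  rw [Matrix.posDef_iff_dotProduct_mulVec]
  constructor
  · unfold Matrix.IsHermitian
    simp only [Matrix.fromBlocks_conjTranspose, Matrix.conjTranspose_zero]
    rw [hP.1.eq, hS.1.eq]
  · intro x hx
    have hx' : x ∘ Sum.inl ≠ 0 ∨ x ∘ Sum.inr ≠ 0 := by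
      by_contra h
      push_neg at h
      apply hx
      funext i
      cases i with
      | inl i => exact congrFun h.1 i
      | inr i => exact congrFun h.2 i
    have hsplit : x = Sum.elim (x ∘ Sum.inl) (x ∘ Sum.inr) := by
      funext i; cases i <;> rfl
    rw [hsplit, Matrix.fromBlocks_mulVec]
    simp only [Matrix.zero_mulVec, add_zero, zero_add, Sum.elim_comp_inl, Sum.elim_comp_inr,
      star_trivial]
    rw [sumElim_dotProduct_sumElim]
    rcases hx' with h | h
    · have h1 := hP.dotProduct_mulVec_pos h
      have h2 := (Matrix.posSemidef_iff_dotProduct_mulVec.mp hS.posSemidef).2 (x ∘ Sum.inr)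
      simp only [star_trivial] at h1 h2
      linarith
    · have h1 := (Matrix.posSemidef_iff_dotProduct_mulVec.mp hP.posSemidef).2 (x ∘ Sum.inl)
      have h2 := hS.dotProduct_mulVec_pos h
      simp only [star_trivial] at h1 h2
      linarith

/-- Schur complement reduction of the three-block step-size matrix. -/
theorem three_block_schur_reduction (n m p : ℕ) (hn : 0 < n) (hm : 0 < m) (hp : 0 < p)
    (dτ : Fin n → ℝ) (hdτ : ∀ i, 0 < dτ i)
    (dκ : Fin m → ℝ) (hdκ : ∀ i, 0 < dκ i)
    (γ : ℝ) (hγ : 0 < γ)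
    (A : Matrix (Fin m) (Fin n) ℝ) (B : Matrix (Fin p) (Fin n) ℝ) :
    (Matrix.fromBlocks (Matrix.diagonal dτ)
        (Matrix.fromCols (-Aᵀ) (-Bᵀ))
        (Matrix.fromRows (-A) (-B))
        (Matrix.fromBlocks (Matrix.diagonal dκ) 0 0
          ((1 / γ) • (1 : Matrix (Fin p) (Fin p) ℝ)))).PosSemidef ↔
      (Matrix.diagonal dτ - γ • (Bᵀ * B) -
        Aᵀ * (Matrix.diagonal dκ)⁻¹ * A).PosSemidef := by
  set Dκ := Matrix.diagonal dκ with hDκ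
  set G : Matrix (Fin p) (Fin p) ℝ := (1 / γ) • (1 : Matrix (Fin p) (Fin p) ℝ) with hG
  have hDκpos : Dκ.PosDef := Matrix.posDef_diagonal_iff.mpr fun i => hdκ i
  have hGpos : G.PosDef := by
    rw [hG, Matrix.smul_one_eq_diagonal]
    exact Matrix.posDef_diagonal_iff.mpr fun _ => by positivity
  have hD : (Matrix.fromBlocks Dκ 0 0 G).PosDef := posDef_fromBlocks_diag hDκpos hGpos
  haveI : Invertible (Matrix.fromBlocks Dκ 0 0 G) :=
    (Matrix.fromBlocks Dκ 0 0 G).invertibleOfIsUnitDet hD.det_pos.ne'.isUnit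
  -- compute the inverse of the block diagonal matrix
  have hDκdet : IsUnit Dκ.det := hDκpos.det_pos.ne'.isUnit
  have hDinv : (Matrix.fromBlocks Dκ 0 0 G)⁻¹ = Matrix.fromBlocks Dκ⁻¹ 0 0 (γ • 1) := by
    apply Matrix.inv_eq_right_inv
    rw [Matrix.fromBlocks_multiply]
    simp only [Matrix.mul_zero, Matrix.zero_mul, add_zero, zero_add]
    rw [Matrix.mul_nonsing_inv _ hDκdet]
    have : G * (γ • 1) = 1 := by
      rw [hG, Matrix.smul_mul, Matrix.mul_smul, smul_smul]
      simp [one_div, inv_mul_cancel₀ hγ.ne']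
    rw [this, Matrix.fromBlocks_one]
  have hBH : (Matrix.fromCols (-Aᵀ) (-Bᵀ))ᴴ = Matrix.fromRows (-A) (-B) := by
    rw [Matrix.conjTranspose_fromCols_eq_fromRows_conjTranspose]
    congr 1 <;> ext i j <;> simp [Matrix.conjTranspose_apply]
  rw [← hBH, Matrix.PosDef.fromBlocks₂₂ _ _ hD, hDinv, hBH]
  have hprod : Matrix.fromCols (-Aᵀ) (-Bᵀ) * Matrix.fromBlocks Dκ⁻¹ 0 0 (γ • 1 : Matrix (Fin p) (Fin p) ℝ) *
      Matrix.fromRows (-A) (-B) = Aᵀ * Dκ⁻¹ * A + γ • (Bᵀ * B) := by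
    rw [Matrix.fromCols_mul_fromBlocks, Matrix.fromCols_mul_fromRows]
    simp only [Matrix.mul_zero, Matrix.zero_mul, add_zero, zero_add]
    rw [Matrix.mul_smul, Matrix.mul_one]
    simp only [Matrix.neg_mul, Matrix.mul_neg, neg_neg, Matrix.smul_mul]
    rw [Matrix.mul_assoc]
    simp [smul_neg]
  rw [hprod]
  constructor <;> intro h <;> [skip; skip] <;>
    · convert h using 1
      · rfl
      abel
end
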